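/- arXiv:1008.4167 — 2 statements merged into one kernel-verified Lean document; each statement's English description precedes it below -/
import Mathlib

section
/- For every n ≥ 2 and every permutation π of {1,…,n}, let N(π) denote the least integer N ≥ 2 such that π ∈ Al(Σ_N). Then N(π) = ⌊B(π)⌋ + 1. -/
/-- The shift map iterated `k` times: `(shift k w) i = w (i + k)`,
so `shift k w = w_k w_{k+1} w_{k+2} …`. -/
def shift (k : ℕ) (w : ℕ → ℕ) : ℕ → ℕ := fun i => w (i + k)

/-- Strict lexicographic order on infinite words: `v < w` iff there is an index `i`
with `v j = w j` for all `j < i` and `v i < w i`. -/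
def LexLt (v w : ℕ → ℕ) : Prop := ∃ i, (∀ j < i, v j = w j) ∧ v i < w i

/-- Weak lexicographic order: `v ≤ w` iff `v < w` or `v = w`. -/
def LexLe (v w : ℕ → ℕ) : Prop := LexLt v w ∨ v = w

/-- A word is a bounded sequence of natural numbers. -/
def IsWord (w : ℕ → ℕ) : Prop := ∃ M, ∀ i, w i ≤ M

/-- `fword w β = ∑_{i ≥ 0} w_i β^{-(i+1)} = w_0/β + w_1/β² + …`. -/
noncomputable def fword (w : ℕ → ℕ) (β : ℝ) : ℝ := ∑' i : ℕ, (w i : ℝ) / β ^ (i + 1)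

open Classical in
/-- `B̂(w)`: zero for the zero word, and otherwise `inf {β > 1 : f_w(β) ≤ 1}`. -/
noncomputable def Bhat (w : ℕ → ℕ) : ℝ :=
  if w = fun _ => 0 then 0 else sInf {β : ℝ | 1 < β ∧ fword w β ≤ 1}

/-- `B̄(w) = sup_{j ≥ 0} B̂(σ^j w)`. -/
noncomputable def Bbar (w : ℕ → ℕ) : ℝ := ⨆ j : ℕ, Bhat (shift j w)

/-- The sequence `A_i` in the β-expansion of `β`: `A_0 = β`, `A_{i+1} = β (A_i - ⌊A_i⌋)`. -/
noncomputable def betaA (β : ℝ) : ℕ → ℝ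
  | 0 => β
  | i + 1 => β * (betaA β i - (⌊betaA β i⌋₊ : ℝ))

/-- The β-expansion of `β`: the word `a` with `a_i = ⌊A_i⌋`. -/
noncomputable def betaExp (β : ℝ) : ℕ → ℕ := fun i => ⌊betaA β i⌋₊

/-- The domain `W(β)` of the β-shift: all words `w` with `σ^k w < a` lexicographically
for every `k ≥ 0`, where `a` is the β-expansion of `β`. -/
def Wset (β : ℝ) : Set (ℕ → ℕ) :=
  {w | IsWord w ∧ ∀ k : ℕ, LexLt (shift k w) (betaExp β)}

/-- `π` is a permutation of `{1, …, n}` (viewed as a map `ℕ → ℕ`). -/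
def IsPerm (n : ℕ) (π : ℕ → ℕ) : Prop := Set.BijOn π (Set.Icc 1 n) (Set.Icc 1 n)

/-- The word `w` induces the permutation `π` of `{1, …, n}`: for all `1 ≤ i, j ≤ n`,
`π(i) < π(j)` iff `σ^{i-1} w < σ^{j-1} w` lexicographically. -/
def Induces (n : ℕ) (w : ℕ → ℕ) (π : ℕ → ℕ) : Prop :=
  ∀ i ∈ Set.Icc 1 n, ∀ j ∈ Set.Icc 1 n,
    (π i < π j ↔ LexLt (shift (i - 1) w) (shift (j - 1) w))

/-- `π ∈ Al(Σ_β)`: some word in `W(β)` induces `π`. -/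
def Allowed (β : ℝ) (n : ℕ) (π : ℕ → ℕ) : Prop := ∃ w ∈ Wset β, Induces n w π

/-- The shift-complexity `B(π) = inf {β > 1 : π ∈ Al(Σ_β)}`. -/
noncomputable def Bperm (n : ℕ) (π : ℕ → ℕ) : ℝ :=
  sInf {β : ℝ | 1 < β ∧ Allowed β n π}

/-- `ρ_m` is the permutation `1 m 2 (m-1) 3 (m-2) …` of `{1, …, m}`:
`ρ(2i-1) = i` and `ρ(2i) = m+1-i`. -/
def IsRho (m : ℕ) (ρ : ℕ → ℕ) : Prop :=
  IsPerm m ρ ∧ (∀ i, 1 ≤ i → 2 * i - 1 ≤ m → ρ (2 * i - 1) = i) ∧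
    (∀ i, 1 ≤ i → 2 * i ≤ m → ρ (2 * i) = m + 1 - i)

/-! ### Auxiliary lemmas -/

lemma lexLt_irrefl (w : ℕ → ℕ) : ¬ LexLt w w := by
  rintro ⟨i, -, hi⟩; exact lt_irrefl _ hi

lemma lexLt_asymm {v w : ℕ → ℕ} (h1 : LexLt v w) (h2 : LexLt w v) : False := by
  obtain ⟨i, hpi, hi⟩ := h1
  obtain ⟨j, hpj, hj⟩ := h2
  rcases lt_trichotomy i j with h | h | h
  · rw [hpj i h] at hi; exact lt_irrefl _ hi
  · subst h; exact lt_irrefl _ (hi.trans hj)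
  · rw [hpi j h] at hj; exact lt_irrefl _ hj

lemma betaA_natCast (m : ℕ) : ∀ k, betaA (m : ℝ) (k + 1) = 0 := by
  intro k
  induction k with
  | zero => simp [betaA]
  | succ k ih => rw [show k + 1 + 1 = (k + 1) + 1 from rfl, betaA, ih]; simp

lemma betaExp_natCast_zero (m : ℕ) : betaExp (m : ℝ) 0 = m := by
  simp [betaExp, betaA]

lemma betaExp_natCast_succ (m k : ℕ) : betaExp (m : ℝ) (k + 1) = 0 := by
  simp [betaExp, betaA_natCast]

lemma wset_digit_lt (m : ℕ) (w : ℕ → ℕ) (hw : w ∈ Wset (m : ℝ)) (k : ℕ) : w k < m := by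
  obtain ⟨i, hpre, hlt⟩ := hw.2 k
  cases i with
  | zero =>
    rw [betaExp_natCast_zero] at hlt
    simpa [shift] using hlt
  | succ i => rw [betaExp_natCast_succ] at hlt; exact absurd hlt (Nat.not_lt_zero _)

lemma wset_digit_le (β : ℝ) (w : ℕ → ℕ) (hw : w ∈ Wset β) (k : ℕ) : w k ≤ ⌊β⌋₊ := by
  obtain ⟨i, hpre, hlt⟩ := hw.2 k
  have h0 : betaExp β 0 = ⌊β⌋₊ := rfl
  cases i with
  | zero =>
    rw [h0] at hlt
    simpa [shift] using hlt.le
  | succ i =>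
    have := hpre 0 (Nat.succ_pos i)
    rw [h0] at this
    simpa [shift] using this.le

lemma mem_wset_nat (m : ℕ) (w : ℕ → ℕ) (h1 : IsWord w) (h2 : ∀ k, w k < m) :
    w ∈ Wset (m : ℝ) := by
  refine ⟨h1, fun k => ⟨0, fun j hj => absurd hj (Nat.not_lt_zero j), ?_⟩⟩
  rw [betaExp_natCast_zero]
  simpa [shift] using h2 k

/-- There is a β just below N whose β-expansion begins with K+1 digits equal to N-1. -/
lemma exists_beta (N K : ℕ) (hN : 2 ≤ N) :
    ∃ β : ℝ, 1 < β ∧ β < N ∧ ∀ i ≤ K, betaExp β i = N - 1 := by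
  have hN1 : (2 : ℝ) ≤ (N : ℝ) := by exact_mod_cast hN
  set v : ℝ := ((N : ℝ) + 1)⁻¹ with hv
  have hv0 : 0 < v := by positivity
  have hv1 : v ≤ 1 / 3 := by
    rw [hv, show (1 : ℝ) / 3 = (3 : ℝ)⁻¹ by norm_num]
    exact inv_anti₀ (by norm_num) (by linarith)
  have hvle1 : v ≤ 1 := by linarith
  set d : ℝ := v ^ (K + 1) with hd
  have hd0 : 0 < d := pow_pos hv0 _
  have hdv : d ≤ v := by
    calc d ≤ v ^ 1 := pow_le_pow_of_le_one hv0.le hvle1 (by omega)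
    _ = v := pow_one v
  set β : ℝ := (N : ℝ) - d with hβ
  have hβ1 : 1 < β := by rw [hβ]; linarith
  have hβN : β < N := by rw [hβ]; linarith
  have hβ0 : 0 < β := by linarith
  have hfl : ∀ x : ℝ, (N : ℝ) - 1 ≤ x → x < N → ⌊x⌋₊ = N - 1 := by
    intro x hx1 hx2
    have hcast : ((N - 1 : ℕ) : ℝ) = (N : ℝ) - 1 := by
      push_cast [Nat.cast_sub (by omega : 1 ≤ N)]; ring
    rw [Nat.floor_eq_iff (by linarith : (0:ℝ) ≤ x)]
    constructor
    · rw [hcast]; exact hx1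
    · rw [hcast]; linarith
  have key : ∀ i, i ≤ K → ((N : ℝ) - v ^ (K + 1 - i) ≤ betaA β i ∧ betaA β i < N) := by
    intro i
    induction i with
    | zero =>
      intro _
      constructor
      · show (N : ℝ) - v ^ (K + 1 - 0) ≤ β
        rw [hβ]; simp [hd]
      · show β < (N : ℝ)
        exact hβN
    | succ i ih =>
      intro hi
      obtain ⟨h1, h2⟩ := ih (by omega)
      set ε : ℝ := v ^ (K + 1 - i) with hε
      have hε0 : 0 < ε := pow_pos hv0 _
      have hεv : ε ≤ v := by
        calc ε ≤ v ^ 1 := pow_le_pow_of_le_one hv0.le hvle1 (by omega)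
        _ = v := pow_one v
      have hε1 : ε < 1 := by linarith
      have hdε : d ≤ ε := pow_le_pow_of_le_one hv0.le hvle1 (by omega)
      have hflA : (⌊betaA β i⌋₊ : ℝ) = (N : ℝ) - 1 := by
        rw [hfl (betaA β i) (by linarith) h2]
        push_cast [Nat.cast_sub (by omega : 1 ≤ N)]; ring
      have hnext : betaA β (i + 1) = β * (betaA β i - ((N : ℝ) - 1)) := by
        rw [betaA, hflA]
      constructor
      · have hKi : v ^ (K + 1 - (i + 1)) = (↑N + 1) * ε := by
          have : K + 1 - i = (K - i) + 1 := by omega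
          rw [hε, this, show K + 1 - (i + 1) = K - i from by omega, pow_succ]
          field_simp [hv]
          try (rw [hv]; field_simp)
        rw [hnext, hKi]
        have hlow : 1 - ε ≤ betaA β i - ((N : ℝ) - 1) := by linarith
        have : β * (1 - ε) ≤ β * (betaA β i - ((N : ℝ) - 1)) :=
          mul_le_mul_of_nonneg_left hlow hβ0.le
        nlinarith [hdε, hε0.le, hd0.le]
      · rw [hnext]
        nlinarith [h2, hβ0]
  refine ⟨β, hβ1, hβN, fun i hi => ?_⟩
  obtain ⟨h1, h2⟩ := key i hi
  have hεv : v ^ (K + 1 - i) ≤ v := by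
    calc v ^ (K + 1 - i) ≤ v ^ 1 := pow_le_pow_of_le_one hv0.le hvle1 (by omega)
    _ = v := pow_one v
  exact hfl (betaA β i) (by linarith) h2
/-- If π is allowed in the N-shift, it is allowed in some β-shift with β < N. -/
lemma exists_lt_allowed (n : ℕ) (π : ℕ → ℕ) (hπ : IsPerm n π) (N : ℕ) (hN : 2 ≤ N)
    (h : Allowed (N : ℝ) n π) : ∃ β : ℝ, 1 < β ∧ β < N ∧ Allowed β n π := by
  classical
  obtain ⟨w, hwW, hwI⟩ := h
  have hdig : ∀ k, w k < N := wset_digit_lt N w hwW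
  set f : ℕ × ℕ → ℕ := fun p =>
    if h : LexLt (shift (p.1 - 1) w) (shift (p.2 - 1) w) then h.choose else 0 with hf
  set D := ((Finset.Icc 1 n) ×ˢ (Finset.Icc 1 n)).sup f with hD
  set M := n + D + 1 with hM
  set w' : ℕ → ℕ := fun j => if j < M then w j else 0 with hw'
  have hd' : ∀ k, w' k < N := by
    intro k
    by_cases h : k < M
    · simpa [hw', h] using hdig k
    · simp [hw', h]; omega
  have hz : ∀ j, M ≤ j → w' j = 0 := by
    intro j hj; simp [hw', Nat.not_lt.mpr hj]
  have hpres : ∀ i ∈ Set.Icc 1 n, ∀ j ∈ Set.Icc 1 n,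
      LexLt (shift (i - 1) w) (shift (j - 1) w) →
      LexLt (shift (i - 1) w') (shift (j - 1) w') := by
    intro i hi j hj hlt
    have hfij : f (i, j) = hlt.choose := by
      simp only [hf]; rw [dif_pos hlt]
    have hmem : (i, j) ∈ (Finset.Icc 1 n) ×ˢ (Finset.Icc 1 n) := by
      rw [Finset.mem_product, Finset.mem_Icc, Finset.mem_Icc]
      exact ⟨⟨hi.1, hi.2⟩, ⟨hj.1, hj.2⟩⟩
    have hle : hlt.choose ≤ D := hfij ▸ Finset.le_sup hmem
    obtain ⟨hpre, hstrict⟩ := hlt.choose_spec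
    have hin : i ≤ n := hi.2
    have hjn : j ≤ n := hj.2
    refine ⟨hlt.choose, fun l hl => ?_, ?_⟩
    · have e1 : l + (i - 1) < M := by omega
      have e2 : l + (j - 1) < M := by omega
      show w' (l + (i - 1)) = w' (l + (j - 1))
      simp only [hw', if_pos e1, if_pos e2]
      exact hpre l hl
    · have e1 : hlt.choose + (i - 1) < M := by omega
      have e2 : hlt.choose + (j - 1) < M := by omega
      show w' (hlt.choose + (i - 1)) < w' (hlt.choose + (j - 1))
      simp only [hw', if_pos e1, if_pos e2]
      exact hstrict
  have hI' : Induces n w' π := by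
    intro i hi j hj
    constructor
    · intro hlt
      exact hpres i hi j hj ((hwI i hi j hj).mp hlt)
    · intro hlt
      by_contra hcon
      rcases (Nat.not_lt.mp hcon).lt_or_eq with h2 | h2
      · exact lexLt_asymm (hpres j hj i hi ((hwI j hj i hi).mp h2)) hlt
      · have : j = i := hπ.2.1 hj hi h2
        subst this
        exact lexLt_irrefl _ hlt
  obtain ⟨β, hβ1, hβN, hβdig⟩ := exists_beta N M hN
  refine ⟨β, hβ1, hβN, w', ⟨⟨N, fun i => (hd' i).le⟩, ?_⟩, hI'⟩
  intro k
  have hex : ∃ r, w' (r + k) < N - 1 := ⟨M, by rw [hz (M + k) (by omega)]; omega⟩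
  have hrM : Nat.find hex ≤ M := Nat.find_min' hex (by rw [hz (M + k) (by omega)]; omega)
  refine ⟨Nat.find hex, fun l hl => ?_, ?_⟩
  · have h1 : ¬ w' (l + k) < N - 1 := Nat.find_min hex hl
    have h2 : w' (l + k) < N := hd' _
    show w' (l + k) = betaExp β l
    rw [hβdig l (by omega)]
    omega
  · have h1 := Nat.find_spec hex
    show w' (Nat.find hex + k) < betaExp β (Nat.find hex)
    rw [hβdig _ hrM]
    exact h1

/-- For every `n ≥ 2` and permutation `π` of `{1,…,n}`, if `N(π)` is the least
integer `N ≥ 2` such that `π ∈ Al(Σ_N)`, then `N(π) = ⌊B(π)⌋ + 1`. -/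
theorem stmt_3 (n : ℕ) (hn : 2 ≤ n) (π : ℕ → ℕ) (hπ : IsPerm n π) (N : ℕ)
    (hN : IsLeast {m : ℕ | 2 ≤ m ∧ Allowed (m : ℝ) n π} N) :
    (N : ℤ) = ⌊Bperm n π⌋ + 1 := by
  obtain ⟨⟨hN2, hAll⟩, hmin⟩ := hN
  have hbdd : BddBelow {β : ℝ | 1 < β ∧ Allowed β n π} := ⟨1, fun β hβ => hβ.1.le⟩
  obtain ⟨β₀, hβ₀1, hβ₀N, hβ₀A⟩ := exists_lt_allowed n π hπ N hN2 hAll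
  have hmem : β₀ ∈ {β : ℝ | 1 < β ∧ Allowed β n π} := ⟨hβ₀1, hβ₀A⟩
  have hBlt : Bperm n π < N := lt_of_le_of_lt (csInf_le hbdd hmem) hβ₀N
  have hBge : (N : ℝ) - 1 ≤ Bperm n π := by
    apply le_csInf ⟨β₀, hmem⟩
    intro b hb
    by_contra hcon
    push_neg at hcon
    obtain ⟨hb1, w, hwW, hwI⟩ := hb
    have hN3 : 3 ≤ N := by
      have h2 : (2 : ℝ) < (N : ℝ) := by linarith
      exact_mod_cast (by exact_mod_cast h2 : (2:ℕ) < N)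
    have hcast : ((N - 1 : ℕ) : ℝ) = (N : ℝ) - 1 := by
      push_cast [Nat.cast_sub (by omega : 1 ≤ N)]; ring
    have hd : ∀ k, w k < N - 1 := by
      intro k
      have h1 : w k ≤ ⌊b⌋₊ := wset_digit_le b w hwW k
      have h2 : (⌊b⌋₊ : ℝ) ≤ b := Nat.floor_le (by linarith)
      have h3 : (⌊b⌋₊ : ℝ) < ((N - 1 : ℕ) : ℝ) := by rw [hcast]; linarith
      have h4 : ⌊b⌋₊ < N - 1 := by exact_mod_cast h3
      omega
    have hAll' : Allowed ((N - 1 : ℕ) : ℝ) n π :=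
      ⟨w, mem_wset_nat (N - 1) w hwW.1 hd, hwI⟩
    have := hmin (⟨by omega, hAll'⟩ : (N - 1) ∈ {m : ℕ | 2 ≤ m ∧ Allowed (m : ℝ) n π})
    omega
  have hfloor : ⌊Bperm n π⌋ = (N : ℤ) - 1 := by
    rw [Int.floor_eq_iff]
    constructor
    · push_cast; linarith
    · push_cast; linarith
  omega
end

section
/- Let n ≥ 4. Then B(ρ^R) = B(τ^C) = n − 2, and B(ρ^{RC}) = B(τ) = (n − 2 + √((n−2)² + 4))/2. -/
/-- `τ ∈ S_n` as defined in the paper: for even `n` with `s = n/2`, `τ(1) = s+1`,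
`τ(2j) = s+1+j` and `τ(2j+1) = s+1-j` for `1 ≤ j ≤ s-1`, and `τ(n) = 1`; for odd `n` with
`s = (n+1)/2`, `τ(1) = s+1`, `τ(2j) = s+1-j` for `1 ≤ j ≤ s-1`, `τ(2j+1) = s+1+j` for
`1 ≤ j ≤ s-2`, and `τ(n) = 1`. -/
def IsTau (n : ℕ) (τ : ℕ → ℕ) : Prop :=
  IsPerm n τ ∧
    ((n % 2 = 0 ∧ τ 1 = n / 2 + 1 ∧
        (∀ j, 1 ≤ j → j ≤ n / 2 - 1 → τ (2 * j) = n / 2 + 1 + j ∧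
          τ (2 * j + 1) = n / 2 + 1 - j) ∧
        τ n = 1) ∨
      (n % 2 = 1 ∧ τ 1 = (n + 1) / 2 + 1 ∧
        (∀ j, 1 ≤ j → j ≤ (n + 1) / 2 - 1 → τ (2 * j) = (n + 1) / 2 + 1 - j) ∧
        (∀ j, 1 ≤ j → j ≤ (n + 1) / 2 - 2 → τ (2 * j + 1) = (n + 1) / 2 + 1 + j) ∧
        τ n = 1))

-- ### Section 1 : lex lemmas
theorem lexLt_irrefl_s9 (v : ℕ → ℕ) : ¬ LexLt v v := by
  rintro ⟨i, -, hi⟩; omega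

theorem lexLt_first {v w : ℕ → ℕ} (h : LexLt v w) : v 0 ≤ w 0 := by
  obtain ⟨i, he, hi⟩ := h
  rcases Nat.eq_zero_or_pos i with rfl | hpos
  · omega
  · exact le_of_eq (he 0 hpos)

theorem lexLt_head {v w : ℕ → ℕ} (h : v 0 < w 0) : LexLt v w :=
  ⟨0, by omega, h⟩

theorem lexLt_tail {v w : ℕ → ℕ} (h : LexLt v w) (h0 : v 0 = w 0) :
    LexLt (shift 1 v) (shift 1 w) := by
  obtain ⟨i, he, hi⟩ := h
  rcases Nat.eq_zero_or_pos i with rfl | hpos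
  · omega
  · obtain ⟨i, rfl⟩ := Nat.exists_eq_add_of_le hpos
    rw [show (1:ℕ) + i = i + 1 by omega] at he hi
    exact ⟨i, fun j hj => he (j + 1) (by omega), hi⟩

theorem lexLt_asymm_s9 {v w : ℕ → ℕ} (h : LexLt v w) : ¬ LexLt w v := by
  rintro ⟨i, he, hi⟩
  obtain ⟨i', he', hi'⟩ := h
  rcases lt_trichotomy i i' with hc | rfl | hc
  · have := he' i hc; omega
  · omega
  · have := he i' hc; omega

theorem shift_shift (k : ℕ) (w : ℕ → ℕ) : shift 1 (shift k w) = shift (k + 1) w := by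
  funext i; simp only [shift]; congr 1; omega

theorem shift_zero (w : ℕ → ℕ) : shift 0 w = w := rfl

theorem lexLt_zero {v u : ℕ → ℕ} (hv : ∀ i, v i = 0) {t : ℕ} (ht : 0 < u t) : LexLt v u := by
  classical
  have hex : ∃ i, 0 < u i := ⟨t, ht⟩
  refine ⟨Nat.find hex, fun j hj => ?_, ?_⟩
  · have := Nat.find_min hex hj; rw [hv j]; omega
  · rw [hv]; exact Nat.find_spec hex

theorem not_lexLt_zero {v u : ℕ → ℕ} (hu : ∀ i, u i = 0) : ¬ LexLt v u := by
  rintro ⟨i, -, hi⟩; rw [hu i] at hi; omega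

-- ### Section 2 : beta expansion facts
theorem betaA_nonneg {β : ℝ} (hβ : 0 < β) : ∀ i, 0 ≤ betaA β i := by
  intro i; induction i with
  | zero => exact le_of_lt hβ
  | succ i ih =>
    show 0 ≤ β * (betaA β i - (⌊betaA β i⌋₊ : ℝ))
    have := Nat.floor_le ih
    nlinarith

theorem betaA_le {β : ℝ} (hβ : 0 < β) : ∀ i, betaA β i ≤ β := by
  intro i; cases i with
  | zero => exact le_refl β
  | succ i =>
    show β * (betaA β i - (⌊betaA β i⌋₊ : ℝ)) ≤ β
    have h1 : betaA β i < (⌊betaA β i⌋₊ : ℝ) + 1 := Nat.lt_floor_add_one _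
    nlinarith

theorem betaExp_zero (β : ℝ) : betaExp β 0 = ⌊β⌋₊ := rfl

theorem betaExp_le_head {β : ℝ} (hβ : 0 < β) (i : ℕ) : betaExp β i ≤ betaExp β 0 :=
  Nat.floor_mono (betaA_le hβ i)

theorem betaExp_after_max {β : ℝ} (hβ : 0 < β) (i : ℕ)
    (h : betaExp β i = betaExp β 0) : betaExp β (i + 1) ≤ betaExp β 1 := by
  have h1 : betaA β (i+1) ≤ betaA β 1 := by
    show β * (betaA β i - (⌊betaA β i⌋₊ : ℝ)) ≤ β * (betaA β 0 - (⌊betaA β 0⌋₊ : ℝ))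
    have h2 : betaA β i ≤ β := betaA_le hβ i
    have h3 : (⌊betaA β i⌋₊ : ℝ) = (⌊β⌋₊ : ℝ) := by
      have : ⌊betaA β i⌋₊ = ⌊β⌋₊ := h
      rw [this]
    show β * (betaA β i - (⌊betaA β i⌋₊ : ℝ)) ≤ β * (β - (⌊β⌋₊ : ℝ))
    rw [h3]; nlinarith
  exact Nat.floor_mono h1

theorem exists_first_pos_digit {β : ℝ} (hβ : 1 < β) (m : ℕ) (hm : 0 < betaA β m) :
    ∃ k, m ≤ k ∧ (∀ j, m ≤ j → j < k → betaExp β j = 0) ∧ 1 ≤ betaExp β k := by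
  classical
  have hβ0 : (0:ℝ) < β := by linarith
  have hex : ∃ k, m ≤ k ∧ 1 ≤ betaExp β k := by
    by_contra hc
    push_neg at hc
    have hz : ∀ j, m ≤ j → betaExp β j = 0 := by
      intro j hj; have := hc j hj; omega
    have hgrow : ∀ t, betaA β (m + t) = β ^ t * betaA β m := by
      intro t; induction t with
      | zero => simp
      | succ t ih =>
        have hz' : (⌊betaA β (m+t)⌋₊ : ℝ) = 0 := by
          have := hz (m+t) (by omega); unfold betaExp at this; rw [this]; simp
        show β * (betaA β (m+t) - (⌊betaA β (m+t)⌋₊ : ℝ)) = β ^ (t+1) * betaA β m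
        rw [hz', ih]; ring
    obtain ⟨t, ht⟩ := pow_unbounded_of_one_lt (β / betaA β m) hβ
    have h1 : betaA β (m + t) ≤ β := betaA_le hβ0 _
    rw [hgrow t] at h1
    have : β / betaA β m * betaA β m < β ^ t * betaA β m :=
      mul_lt_mul_of_pos_right ht hm
    rw [div_mul_cancel₀ _ (ne_of_gt hm)] at this
    linarith
  refine ⟨Nat.find hex, (Nat.find_spec hex).1, fun j hj hjk => ?_, (Nat.find_spec hex).2⟩
  have := Nat.find_min hex hjk
  simp only [not_and, not_le] at this
  have := this hj; omega

-- ### Section 3 : Wset lemmas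
theorem Wset_digit_le {β : ℝ} {w : ℕ → ℕ} (hw : w ∈ Wset β) (k : ℕ) :
    w k ≤ betaExp β 0 := by
  have := lexLt_first (hw.2 k)
  simpa [shift] using this

theorem L3 {w : ℕ → ℕ} {k : ℕ} (h : LexLt (shift (k+1) w) (shift k w)) (h0 : w k = 0) :
    False := by
  have key : ∀ m, w (k + m) = 0 ∧ LexLt (shift (k + m + 1) w) (shift (k + m) w) := by
    intro m; induction m with
    | zero => exact ⟨by simpa using h0, by simpa using h⟩
    | succ m ih =>
      rw [show k + (m+1) = k + m + 1 by omega]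
      have hle : w (k + m + 1) ≤ w (k + m) := by
        have := lexLt_first ih.2; simpa [shift] using this
      have hz : w (k + m + 1) = 0 := by omega
      have heq : (shift (k + m + 1) w) 0 = (shift (k + m) w) 0 := by
        simp only [shift, Nat.zero_add]; omega
      have := lexLt_tail ih.2 heq
      rw [shift_shift, shift_shift] at this
      exact ⟨hz, this⟩
  have hzz : ∀ i, w (k + i) = 0 := fun i => (key i).1
  have : shift (k+1) w = shift k w := by
    funext i; simp only [shift]
    rw [show i + (k+1) = k + (i+1) by omega, show i + k = k + i by omega, hzz, hzz]
  rw [this] at h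
  exact lexLt_irrefl_s9 _ h

theorem L2 {β : ℝ} {w : ℕ → ℕ} (hβ : 1 < β) (hw : w ∈ Wset β) {k : ℕ}
    (h : LexLt (shift k w) (shift (k+1) w)) (h0 : w k = betaExp β 0) : False := by
  have hβ0 : (0:ℝ) < β := by linarith
  have hdig : ∀ m, w m ≤ betaExp β 0 := Wset_digit_le hw
  have key : ∀ m, w (k + m) = betaExp β 0 ∧ LexLt (shift (k + m) w) (shift (k + m + 1) w) := by
    intro m; induction m with
    | zero => exact ⟨by simpa using h0, by simpa using h⟩
    | succ m ih =>
      rw [show k + (m+1) = k + m + 1 by omega]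
      have hle : w (k + m) ≤ w (k + m + 1) := by
        have := lexLt_first ih.2; simpa [shift] using this
      have hz : w (k + m + 1) = betaExp β 0 := by
        have := hdig (k + m + 1); omega
      have heq : (shift (k + m) w) 0 = (shift (k + m + 1) w) 0 := by
        simp only [shift, Nat.zero_add]; omega
      have := lexLt_tail ih.2 heq
      rw [shift_shift, shift_shift] at this
      exact ⟨hz, this⟩
  set c := betaExp β 0 with hc
  have hconst : shift k w = (fun _ => c) := by
    funext i; simp only [shift]
    rw [show i + k = k + i by omega]; exact (key i).1
  have amax : ∀ j, LexLt (fun _ => c) (shift j (betaExp β)) ∧ betaExp β j = c := by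
    intro j; induction j with
    | zero =>
      refine ⟨?_, rfl⟩
      have := hw.2 k; rw [hconst] at this; exact this
    | succ j ih =>
      have heads : (fun _ => c) 0 = (shift j (betaExp β)) 0 := by
        simp only [shift, Nat.zero_add]; exact ih.2.symm
      have hlt := lexLt_tail ih.1 heads
      rw [shift_shift] at hlt
      have hlt' : LexLt (fun _ => c) (shift (j+1) (betaExp β)) := hlt
      have h1 : c ≤ betaExp β (j + 1) := by
        have := lexLt_first hlt'; simpa [shift] using this
      have h2 := betaExp_le_head hβ0 (j+1)
      exact ⟨hlt', by omega⟩
  have hfin : betaExp β = (fun _ => c) := funext fun j => (amax j).2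
  have := (amax 0).1
  rw [shift_zero, hfin] at this
  exact lexLt_irrefl_s9 _ this

def altw (c0 c1 : ℕ) : ℕ → ℕ := fun i => if i % 2 = 0 then c0 else c1

theorem altw_shift2 (c0 c1 : ℕ) : shift 2 (altw c0 c1) = altw c0 c1 := by
  funext i; simp only [shift, altw]
  rw [show (i + 2) % 2 = i % 2 by omega]

theorem altw_zero (c0 c1 : ℕ) : altw c0 c1 0 = c0 := rfl
theorem altw_one (c0 c1 : ℕ) : altw c0 c1 1 = c1 := rfl

theorem L2' {β : ℝ} {w : ℕ → ℕ} (hβ : 1 < β) (hw : w ∈ Wset β) {k : ℕ}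
    (h : LexLt (shift k w) (shift (k+2) w)) (h0 : w k = betaExp β 0)
    (h1 : w (k+1) = betaExp β 1) : False := by
  have hβ0 : (0:ℝ) < β := by linarith
  have hdig : ∀ m, w m ≤ betaExp β 0 := Wset_digit_le hw
  set c0 := betaExp β 0 with hc0
  set c1 := betaExp β 1 with hc1
  have key : ∀ m, w (k + 2*m) = c0 ∧ w (k + 2*m + 1) = c1 ∧
      LexLt (shift (k + 2*m) w) (shift (k + 2*m + 2) w) := by
    intro m; induction m with
    | zero =>
      refine ⟨by simpa using h0, by simpa using h1, ?_⟩
      simpa using h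
    | succ m ih =>
      rw [show k + 2*(m+1) = k + 2*m + 2 by omega]
      have hle0 : w (k + 2*m) ≤ w (k + 2*m + 2) := by
        have := lexLt_first ih.2.2; simpa [shift] using this
      have hz0 : w (k + 2*m + 2) = c0 := by have := hdig (k + 2*m + 2); omega
      have heq0 : (shift (k + 2*m) w) 0 = (shift (k + 2*m + 2) w) 0 := by
        simp only [shift, Nat.zero_add]; omega
      have htail1 := lexLt_tail ih.2.2 heq0
      rw [shift_shift, shift_shift] at htail1
      have hle1 : w (k + 2*m + 1) ≤ w (k + 2*m + 3) := by
        have := lexLt_first htail1; simpa [shift] using this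
      have hub : w (k + 2*m + 3) ≤ c1 := by
        have hWa := hw.2 (k + 2*m + 2)
        have heqa : (shift (k + 2*m + 2) w) 0 = betaExp β 0 := by
          simp only [shift, Nat.zero_add]; omega
        have := lexLt_tail hWa heqa
        rw [shift_shift] at this
        have := lexLt_first this
        simpa [shift] using this
      have hz1 : w (k + 2*m + 3) = c1 := by omega
      have heq1 : (shift (k + 2*m + 1) w) 0 = (shift (k + 2*m + 3) w) 0 := by
        simp only [shift, Nat.zero_add]; omega
      have htail2 := lexLt_tail htail1 heq1
      rw [shift_shift, shift_shift] at htail2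
      exact ⟨hz0, hz1, htail2⟩
  have hconst : shift k w = altw c0 c1 := by
    funext i
    simp only [shift, altw]
    rcases Nat.even_or_odd i with ⟨m, rfl⟩ | ⟨m, rfl⟩
    · rw [if_pos (by omega), show m + m + k = k + 2*m by omega]; exact (key m).1
    · rw [if_neg (by omega), show 2*m + 1 + k = k + 2*m + 1 by omega]; exact (key m).2.1
  have amax : ∀ j, betaExp β (2*j) = c0 ∧ betaExp β (2*j+1) = c1 ∧
      LexLt (altw c0 c1) (shift (2*j) (betaExp β)) := by
    intro j; induction j with
    | zero =>
      refine ⟨rfl, rfl, ?_⟩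
      have := hw.2 k; rw [hconst] at this; show LexLt _ (betaExp β); simpa using this
    | succ j ih =>
      have heq0 : (altw c0 c1) 0 = (shift (2*j) (betaExp β)) 0 := by
        simp only [shift, Nat.zero_add, altw_zero]; exact ih.1.symm
      have ht1 := lexLt_tail ih.2.2 heq0
      rw [shift_shift] at ht1
      have heq1 : (shift 1 (altw c0 c1)) 0 = (shift (2*j+1) (betaExp β)) 0 := by
        simp only [shift, Nat.zero_add]; exact ih.2.1.symm
      have ht2 := lexLt_tail ht1 heq1
      rw [shift_shift, shift_shift, altw_shift2] at ht2
      have ht2' : LexLt (altw c0 c1) (shift (2*(j+1)) (betaExp β)) := by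
        rw [show 2*(j+1) = 2*j+1+1 by omega]; exact ht2
      have hA : betaExp β (2*(j+1)) = c0 := by
        have hge := lexLt_first ht2'
        simp only [shift, Nat.zero_add, altw_zero] at hge
        have := betaExp_le_head hβ0 (2*(j+1)); omega
      have hB : betaExp β (2*(j+1)+1) = c1 := by
        have hub := betaExp_after_max hβ0 (2*(j+1)) hA
        have heq2 : (altw c0 c1) 0 = (shift (2*(j+1)) (betaExp β)) 0 := by
          simp only [shift, Nat.zero_add, altw_zero]; exact hA.symm
        have ht3 := lexLt_tail ht2' heq2
        rw [shift_shift] at ht3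
        have hge := lexLt_first ht3
        simp only [shift, Nat.zero_add, altw_one] at hge
        omega
      exact ⟨hA, hB, ht2'⟩
  have hfin : betaExp β = altw c0 c1 := by
    funext i
    rcases Nat.even_or_odd i with ⟨m, rfl⟩ | ⟨m, rfl⟩
    · rw [show m + m = 2*m by omega, (amax m).1]
      simp only [altw]; rw [if_pos (by omega)]
    · rw [(amax m).2.1]
      simp only [altw]; rw [if_neg (by omega)]
  have := (amax 0).2.2
  rw [show 2*0 = 0 by omega, shift_zero, hfin] at this
  exact lexLt_irrefl_s9 _ this

-- ### Section 4 : admissibility lemmas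
theorem adm_head {β : ℝ} {v : ℕ → ℕ} (h : v 0 < betaExp β 0) : LexLt v (betaExp β) :=
  ⟨0, by omega, h⟩

theorem adm_max_zero {β : ℝ} (hβ : 1 < β) (hne : (⌊β⌋₊ : ℝ) < β) {v : ℕ → ℕ}
    (h0 : v 0 = betaExp β 0) (ht : ∀ i, 1 ≤ i → v i = 0) : LexLt v (betaExp β) := by
  have hA1 : 0 < betaA β 1 := by
    show 0 < β * (betaA β 0 - (⌊betaA β 0⌋₊ : ℝ))
    show 0 < β * (β - (⌊β⌋₊ : ℝ))
    nlinarith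
  obtain ⟨kk, hk1, hkz, hkpos⟩ := exists_first_pos_digit hβ 1 hA1
  refine ⟨kk, fun j hj => ?_, ?_⟩
  · rcases Nat.eq_zero_or_pos j with rfl | hp
    · exact h0
    · rw [ht j hp, hkz j hp hj]
  · rw [ht kk (by omega)]; omega

theorem adm_max_one {β : ℝ} (hβ : 1 < β) (hA1 : 1 < betaA β 1) {v : ℕ → ℕ}
    (h0 : v 0 = betaExp β 0) (h1 : v 1 = 1) (ht : ∀ i, 2 ≤ i → v i = 0) :
    LexLt v (betaExp β) := by
  have ha1 : 1 ≤ betaExp β 1 := by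
    exact Nat.le_floor (by exact_mod_cast le_of_lt hA1)
  rcases Nat.lt_or_ge 1 (betaExp β 1) with hgt | heq
  · exact ⟨1, by intro j hj; interval_cases j; exact h0, by rw [h1]; exact hgt⟩
  · have ha1' : betaExp β 1 = 1 := by omega
    have hA2 : 0 < betaA β 2 := by
      show 0 < β * (betaA β 1 - (⌊betaA β 1⌋₊ : ℝ))
      have : (⌊betaA β 1⌋₊ : ℝ) = 1 := by
        have : ⌊betaA β 1⌋₊ = 1 := ha1'
        rw [this]; simp
      rw [this]; nlinarith
    obtain ⟨kk, hk2, hkz, hkpos⟩ := exists_first_pos_digit hβ 2 hA2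
    refine ⟨kk, fun j hj => ?_, ?_⟩
    · rcases Nat.lt_or_ge j 2 with hp | hp
      · interval_cases j
        · exact h0
        · rw [h1, ha1']
      · rw [ht j hp, hkz j hp hj]
    · rw [ht kk (by omega)]; omega

theorem adm_second {β : ℝ} {v : ℕ → ℕ} (h0 : v 0 = betaExp β 0)
    (h1 : v 1 < betaExp β 1) : LexLt v (betaExp β) :=
  ⟨1, by intro j hj; interval_cases j; exact h0, h1⟩

-- ### Section 5 : Induces helpers
theorem induces_of {n : ℕ} {w π : ℕ → ℕ} (hperm : IsPerm n π)
    (H : ∀ i ∈ Set.Icc 1 n, ∀ j ∈ Set.Icc 1 n, π i < π j →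
      LexLt (shift (i-1) w) (shift (j-1) w)) : Induces n w π := by
  intro i hi j hj
  constructor
  · exact H i hi j hj
  · intro hlex
    rcases lt_trichotomy (π i) (π j) with hc | hc | hc
    · exact hc
    · have : i = j := hperm.2.1 hi hj hc
      subst this
      exact absurd hlex (lexLt_irrefl_s9 _)
    · exact absurd (H j hj i hi hc) (lexLt_asymm_s9 hlex)

theorem digit_le {n : ℕ} {w π : ℕ → ℕ} (hInd : Induces n w π) {i j : ℕ}
    (hi1 : 1 ≤ i) (hin : i ≤ n) (hj1 : 1 ≤ j) (hjn : j ≤ n) (hr : π i < π j) :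
    w (i-1) ≤ w (j-1) := by
  have h := (hInd i ⟨hi1, hin⟩ j ⟨hj1, hjn⟩).1 hr
  have := lexLt_first h
  simpa [shift] using this

theorem lex_next {n : ℕ} {w π : ℕ → ℕ} (hInd : Induces n w π) {i j : ℕ}
    (hi1 : 1 ≤ i) (hin : i ≤ n) (hj1 : 1 ≤ j) (hjn : j ≤ n) (hr : π i < π j)
    (heads : w (i-1) = w (j-1)) : LexLt (shift i w) (shift j w) := by
  have h := (hInd i ⟨hi1, hin⟩ j ⟨hj1, hjn⟩).1 hr
  have heq : (shift (i-1) w) 0 = (shift (j-1) w) 0 := by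
    simp only [shift, Nat.zero_add]; exact heads
  have := lexLt_tail h heq
  rw [shift_shift, shift_shift] at this
  rw [show i - 1 + 1 = i by omega, show j - 1 + 1 = j by omega] at this
  exact this

theorem digit_strict {n : ℕ} {w π : ℕ → ℕ} (hInd : Induces n w π) {i j : ℕ}
    (hi1 : 1 ≤ i) (hin : i + 1 ≤ n) (hj1 : 1 ≤ j) (hjn : j + 1 ≤ n) (hr : π i < π j)
    (hr' : ¬ π (i+1) < π (j+1)) : w (i-1) < w (j-1) := by
  have hle := digit_le hInd hi1 (by omega) hj1 (by omega) hr
  rcases Nat.lt_or_ge (w (i-1)) (w (j-1)) with h | h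
  · exact h
  · have heads : w (i-1) = w (j-1) := by omega
    have hlex := lex_next hInd hi1 (by omega) hj1 (by omega) hr heads
    have := (hInd (i+1) ⟨by omega, hin⟩ (j+1) ⟨by omega, hjn⟩).2 (by
      rw [show i + 1 - 1 = i by omega, show j + 1 - 1 = j by omega]; exact hlex)
    exact absurd this hr'

theorem fold_chain {n : ℕ} {w π : ℕ → ℕ} (hInd : Induces n w π) (g : ℕ → ℕ) (K : ℕ)
    (hg : ∀ k, k < K → (1 ≤ g k ∧ g k + 1 ≤ n ∧ 1 ≤ g (k+1) ∧ g (k+1) + 1 ≤ n ∧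
      π (g k) < π (g (k+1)) ∧ ¬ π (g k + 1) < π (g (k+1) + 1))) :
    w (g 0 - 1) + K ≤ w (g K - 1) := by
  induction K with
  | zero => omega
  | succ K ih =>
    have h1 := ih (fun k hk => hg k (by omega))
    obtain ⟨a1, a2, a3, a4, a5, a6⟩ := hg K (by omega)
    have := digit_strict hInd a1 a2 a3 a4 a5 a6
    omega

-- ### Section 6 : sInf and root algebra
theorem sInf_eq_of_set {S : Set ℝ} {c : ℝ} (h1 : ∀ β ∈ S, c ≤ β)
    (h2 : ∀ β, c < β → β ∈ S) : sInf S = c := by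
  apply le_antisymm
  · apply le_of_forall_pos_le_add
    intro ε hε
    exact csInf_le ⟨c, fun x hx => h1 x hx⟩ (h2 _ (by linarith))
  · exact le_csInf ⟨c + 1, h2 _ (by linarith)⟩ h1

-- the root r_n of x^2 - (n-2)x - 1
theorem root_gt {c : ℝ} (hc : 0 < c) : c < (c + Real.sqrt (c^2 + 4)) / 2 := by
  have h1 : (0:ℝ) ≤ c^2 + 4 := by positivity
  have h2 : Real.sqrt (c^2+4) ^ 2 = c^2 + 4 := Real.sq_sqrt h1
  have h3 : 0 ≤ Real.sqrt (c^2+4) := Real.sqrt_nonneg _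
  nlinarith

theorem root_lt {c : ℝ} (hc : 0 < c) : (c + Real.sqrt (c^2 + 4)) / 2 < c + 1 := by
  have h1 : (0:ℝ) ≤ c^2 + 4 := by positivity
  have h2 : Real.sqrt (c^2+4) ^ 2 = c^2 + 4 := Real.sq_sqrt h1
  have h3 : 0 ≤ Real.sqrt (c^2+4) := Real.sqrt_nonneg _
  nlinarith

theorem root_ub {c β : ℝ} (hc : 0 < c) (hβ : (c + Real.sqrt (c^2 + 4)) / 2 < β) :
    1 < β * (β - c) := by
  have h1 : (0:ℝ) ≤ c^2 + 4 := by positivity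
  have h2 : Real.sqrt (c^2+4) ^ 2 = c^2 + 4 := Real.sq_sqrt h1
  have h3 : 0 ≤ Real.sqrt (c^2+4) := Real.sqrt_nonneg _
  have hb0 : 0 < β := by nlinarith
  nlinarith [mul_pos (show 0 < 2*β - c - Real.sqrt (c^2+4) by nlinarith)
    (show 0 < 2*β - c + Real.sqrt (c^2+4) by nlinarith)]

theorem root_lb {c β : ℝ} (hc : 0 < c) (hβ : 0 < β) (h : 1 ≤ β * (β - c)) :
    (c + Real.sqrt (c^2 + 4)) / 2 ≤ β := by
  have h1 : (0:ℝ) ≤ c^2 + 4 := by positivity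
  have h2 : Real.sqrt (c^2+4) ^ 2 = c^2 + 4 := Real.sq_sqrt h1
  have h3 : 0 ≤ Real.sqrt (c^2+4) := Real.sqrt_nonneg _
  have hb : c < β := by nlinarith
  have h4 : Real.sqrt (c^2+4) ≤ 2*β - c := by
    rw [show c^2 + 4 = (2*β - c)^2 - 4*(β*(β-c) - 1) by ring]
    calc Real.sqrt ((2*β - c)^2 - 4*(β*(β-c) - 1)) ≤ Real.sqrt ((2*β - c)^2) := by
          apply Real.sqrt_le_sqrt; nlinarith
      _ = 2*β - c := by rw [Real.sqrt_sq (by nlinarith)]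
  linarith

theorem floor_eq_of {β : ℝ} {m : ℕ} (h1 : (m:ℝ) ≤ β) (h2 : β < m + 1) : ⌊β⌋₊ = m := by
  rw [Nat.floor_eq_iff (le_trans (Nat.cast_nonneg m) h1)]
  exact ⟨h1, h2⟩

-- ### Section 7 : closed formulas for the permutations
def rhoF (n q : ℕ) : ℕ := if q % 2 = 1 then (q+1)/2 else n+1 - q/2
def rhoRF (n q : ℕ) : ℕ := rhoF n (n+1-q)
def rhoRCF (n q : ℕ) : ℕ := n+1 - rhoF n (n+1-q)
def tauF (n q : ℕ) : ℕ :=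
  if q = n then 1 else
  if q % 2 = 0 then (if n % 2 = 0 then n/2+1+q/2 else (n+1)/2+1 - q/2)
  else (if n % 2 = 0 then n/2+1-(q-1)/2 else (n+1)/2+1+(q-1)/2)
def tauCF (n q : ℕ) : ℕ := n+1 - tauF n q

-- ### Section 8 : fold wrappers
theorem fold_desc {n : ℕ} {w π : ℕ → ℕ} (hInd : Induces n w π) (a K : ℕ)
    (h : ∀ k, k < K → (1 ≤ a - 2*k ∧ a - 2*k + 1 ≤ n ∧ 1 ≤ a - 2*(k+1) ∧
      a - 2*(k+1) + 1 ≤ n ∧ π (a - 2*k) < π (a - 2*(k+1)) ∧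
      ¬ π (a - 2*k + 1) < π (a - 2*(k+1) + 1))) :
    w (a - 1) + K ≤ w (a - 2*K - 1) := by
  have := fold_chain hInd (fun k => a - 2*k) K h
  simpa using this

theorem fold_asc {n : ℕ} {w π : ℕ → ℕ} (hInd : Induces n w π) (a K : ℕ)
    (h : ∀ k, k < K → (1 ≤ a + 2*k ∧ a + 2*k + 1 ≤ n ∧ 1 ≤ a + 2*(k+1) ∧
      a + 2*(k+1) + 1 ≤ n ∧ π (a + 2*k) < π (a + 2*(k+1)) ∧
      ¬ π (a + 2*k + 1) < π (a + 2*(k+1) + 1))) :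
    w (a - 1) + K ≤ w (a + 2*K - 1) := by
  have := fold_chain hInd (fun k => a + 2*k) K h
  simpa using this

-- ### Section 9 : lower bound for rho^R
theorem rhoR_lb {n : ℕ} {π : ℕ → ℕ} (hn : 4 ≤ n)
    (hval : ∀ q, 1 ≤ q → q ≤ n → π q = rhoRF n q) :
    ∀ β : ℝ, 1 < β → Allowed β n π → ((n:ℝ) - 2) ≤ β := by
  intro β hβ hal
  obtain ⟨w, hw, hInd⟩ := hal
  have main : n - 2 + w (n-3) ≤ w (n-2) := by
    rcases Nat.even_or_odd n with ⟨s, hs⟩ | ⟨s, hs⟩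
    · -- n = s + s
      have foldA : w (n-2-1) + (s-2) ≤ w (n-2-2*(s-2)-1) := by
        apply fold_desc hInd
        intro k hk
        have e1 := hval (n-2-2*k) (by omega) (by omega)
        have e2 := hval (n-2-2*(k+1)) (by omega) (by omega)
        have e3 := hval (n-2-2*k+1) (by omega) (by omega)
        have e4 := hval (n-2-2*(k+1)+1) (by omega) (by omega)
        simp only [rhoRF, rhoF] at e1 e2 e3 e4
        refine ⟨by omega, by omega, by omega, by omega, ?_, ?_⟩
        · rw [e1, e2]; split_ifs <;> omega
        · rw [e3, e4]; split_ifs <;> omega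
      have mid : w (2-1) < w (1-1) := by
        apply digit_strict hInd (by omega) (by omega) (by omega) (by omega)
        · have e1 := hval 2 (by omega) (by omega)
          have e2 := hval 1 (by omega) (by omega)
          simp only [rhoRF, rhoF] at e1 e2
          rw [e1, e2]; split_ifs <;> omega
        · have e1 := hval 3 (by omega) (by omega)
          have e2 := hval 2 (by omega) (by omega)
          simp only [rhoRF, rhoF] at e1 e2
          rw [e1, e2]; split_ifs <;> omega
      have foldB : w (1-1) + (s-1) ≤ w (1+2*(s-1)-1) := by
        apply fold_asc hInd
        intro k hk
        have e1 := hval (1+2*k) (by omega) (by omega)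
        have e2 := hval (1+2*(k+1)) (by omega) (by omega)
        have e3 := hval (1+2*k+1) (by omega) (by omega)
        have e4 := hval (1+2*(k+1)+1) (by omega) (by omega)
        simp only [rhoRF, rhoF] at e1 e2 e3 e4
        refine ⟨by omega, by omega, by omega, by omega, ?_, ?_⟩
        · rw [e1, e2]; split_ifs <;> omega
        · rw [e3, e4]; split_ifs <;> omega
      rw [show n-2-2*(s-2)-1 = 2-1 by omega] at foldA
      rw [show 1+2*(s-1)-1 = n-2 by omega] at foldB
      rw [show n-2-1 = n-3 by omega] at foldA
      omega
    · -- n = 2s+1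
      have foldA : w (n-2-1) + (s-1) ≤ w (n-2-2*(s-1)-1) := by
        apply fold_desc hInd
        intro k hk
        have e1 := hval (n-2-2*k) (by omega) (by omega)
        have e2 := hval (n-2-2*(k+1)) (by omega) (by omega)
        have e3 := hval (n-2-2*k+1) (by omega) (by omega)
        have e4 := hval (n-2-2*(k+1)+1) (by omega) (by omega)
        simp only [rhoRF, rhoF] at e1 e2 e3 e4
        refine ⟨by omega, by omega, by omega, by omega, ?_, ?_⟩
        · rw [e1, e2]; split_ifs <;> omega
        · rw [e3, e4]; split_ifs <;> omega
      have mid : w (1-1) < w (2-1) := by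
        apply digit_strict hInd (by omega) (by omega) (by omega) (by omega)
        · have e1 := hval 1 (by omega) (by omega)
          have e2 := hval 2 (by omega) (by omega)
          simp only [rhoRF, rhoF] at e1 e2
          rw [e1, e2]; split_ifs <;> omega
        · have e1 := hval 2 (by omega) (by omega)
          have e2 := hval 3 (by omega) (by omega)
          simp only [rhoRF, rhoF] at e1 e2
          rw [e1, e2]; split_ifs <;> omega
      have foldB : w (2-1) + (s-1) ≤ w (2+2*(s-1)-1) := by
        apply fold_asc hInd
        intro k hk
        have e1 := hval (2+2*k) (by omega) (by omega)
        have e2 := hval (2+2*(k+1)) (by omega) (by omega)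
        have e3 := hval (2+2*k+1) (by omega) (by omega)
        have e4 := hval (2+2*(k+1)+1) (by omega) (by omega)
        simp only [rhoRF, rhoF] at e1 e2 e3 e4
        refine ⟨by omega, by omega, by omega, by omega, ?_, ?_⟩
        · rw [e1, e2]; split_ifs <;> omega
        · rw [e3, e4]; split_ifs <;> omega
      rw [show n-2-2*(s-1)-1 = 1-1 by omega] at foldA
      rw [show 2+2*(s-1)-1 = n-2 by omega] at foldB
      rw [show n-2-1 = n-3 by omega] at foldA
      omega
  have hdig : w (n-2) ≤ ⌊β⌋₊ := Wset_digit_le hw (n-2)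
  have hfl : (n - 2 : ℕ) ≤ ⌊β⌋₊ := by omega
  have h1 : ((n-2 : ℕ) : ℝ) ≤ (⌊β⌋₊ : ℝ) := Nat.cast_le.mpr hfl
  have h2 : (⌊β⌋₊ : ℝ) ≤ β := Nat.floor_le (by linarith)
  have h3 : ((n-2 : ℕ) : ℝ) = (n:ℝ) - 2 := by
    push_cast [Nat.cast_sub (by omega : 2 ≤ n)]; ring
  linarith [h3 ▸ le_trans h1 h2]


-- ### Section 10 : more helpers
theorem Wset_second {β : ℝ} {w : ℕ → ℕ} (hw : w ∈ Wset β) {k : ℕ}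
    (h : w k = betaExp β 0) : w (k+1) ≤ betaExp β 1 := by
  have t := lexLt_tail (hw.2 k) (by simp only [shift, Nat.zero_add]; exact h)
  rw [shift_shift] at t
  have := lexLt_first t
  simpa [shift] using this

theorem cast_sub_two {n : ℕ} (hn : 4 ≤ n) : ((n - 2 : ℕ) : ℝ) = (n:ℝ) - 2 := by
  push_cast [Nat.cast_sub (by omega : 2 ≤ n)]; ring

theorem floor_ge_root {n : ℕ} {β : ℝ} (hn : 4 ≤ n) (hβ : 1 < β) (hfl : n - 2 ≤ ⌊β⌋₊)
    (ha1 : ⌊β⌋₊ = n - 2 → 1 ≤ betaExp β 1) :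
    ((n:ℝ) - 2 + Real.sqrt (((n:ℝ) - 2)^2 + 4)) / 2 ≤ β := by
  have hc0 : (0:ℝ) < (n:ℝ) - 2 := by
    have : (4:ℝ) ≤ (n:ℝ) := by exact_mod_cast hn
    linarith
  have hb0 : (⌊β⌋₊ : ℝ) ≤ β := Nat.floor_le (by linarith)
  rcases Nat.lt_or_ge ⌊β⌋₊ (n-1) with hca | hca
  · have hfl' : ⌊β⌋₊ = n - 2 := by omega
    have ha := ha1 hfl'
    have hA1 : (1:ℝ) ≤ betaA β 1 := by
      have h0 : (0:ℝ) ≤ betaA β 1 := betaA_nonneg (by linarith) 1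
      calc (1:ℝ) = ((1:ℕ):ℝ) := by norm_num
        _ ≤ (⌊betaA β 1⌋₊ : ℝ) := Nat.cast_le.mpr ha
        _ ≤ betaA β 1 := Nat.floor_le h0
    have hA1' : betaA β 1 = β * (β - (⌊β⌋₊ : ℝ)) := rfl
    have hcast : (⌊β⌋₊ : ℝ) = (n:ℝ) - 2 := by rw [hfl', cast_sub_two hn]
    apply root_lb hc0 (by linarith)
    rw [hA1', hcast] at hA1
    linarith
  · have h1 : ((n-1:ℕ):ℝ) ≤ β := le_trans (Nat.cast_le.mpr hca) hb0
    have h2 : ((n-1:ℕ):ℝ) = (n:ℝ) - 1 := by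
      push_cast [Nat.cast_sub (by omega : 1 ≤ n)]; ring
    have := root_lt hc0
    linarith [h2 ▸ h1]

theorem tC_lb2 {n : ℕ} {π : ℕ → ℕ} (hn : 4 ≤ n)
    (hval : ∀ q, 1 ≤ q → q ≤ n → π q = tauCF n q) :
    ∀ β : ℝ, 1 < β → Allowed β n π → ((n:ℝ) - 2) ≤ β := by
  intro β hβ hal
  obtain ⟨w, hw, hInd⟩ := hal
  have main : n-3 + w (n-3) ≤ w (n-4) := by
    rcases Nat.even_or_odd n with ⟨s, hs⟩ | ⟨s, hs⟩
    · have hv : ∀ q, 1 ≤ q → q ≤ n → π q = (if q = n then n else if q % 2 = 0 then s-q/2 else s+(q-1)/2) := by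
        intro q h1 h2
        have := hval q h1 h2
        simp only [tauCF, tauF] at this
        split_ifs at this ⊢ <;> omega
      have foldA : w (n-2-1) + (s-2) ≤ w (n-2-2*(s-2)-1) := by
        apply fold_desc hInd
        intro k hk
        refine ⟨by omega, by omega, by omega, by omega, ?_, ?_⟩
        · rw [hv (n-2-2*k) (by omega) (by omega), hv (n-2-2*(k+1)) (by omega) (by omega)]
          split_ifs <;> omega
        · rw [hv (n-2-2*k+1) (by omega) (by omega), hv (n-2-2*(k+1)+1) (by omega) (by omega)]
          split_ifs <;> omega
      have mid : w (2-1) < w (1-1) := by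
        apply digit_strict hInd (by omega) (by omega) (by omega) (by omega)
        · rw [hv 2 (by omega) (by omega), hv 1 (by omega) (by omega)]
          split_ifs <;> omega
        · rw [hv (2+1) (by omega) (by omega), hv (1+1) (by omega) (by omega)]
          split_ifs <;> omega
      have foldB : w (1-1) + (s-2) ≤ w (1+2*(s-2)-1) := by
        apply fold_asc hInd
        intro k hk
        refine ⟨by omega, by omega, by omega, by omega, ?_, ?_⟩
        · rw [hv (1+2*k) (by omega) (by omega), hv (1+2*(k+1)) (by omega) (by omega)]
          split_ifs <;> omega
        · rw [hv (1+2*k+1) (by omega) (by omega), hv (1+2*(k+1)+1) (by omega) (by omega)]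
          split_ifs <;> omega
      rw [show n-2-2*(s-2)-1 = 2-1 by omega] at foldA
      rw [show 1+2*(s-2)-1 = n-4 by omega] at foldB
      rw [show n-2-1 = n-3 by omega] at foldA
      omega
    · have hv : ∀ q, 1 ≤ q → q ≤ n → π q = (if q = n then n else if q % 2 = 0 then s+q/2 else s-(q-1)/2) := by
        intro q h1 h2
        have := hval q h1 h2
        simp only [tauCF, tauF] at this
        split_ifs at this ⊢ <;> omega
      have foldA : w (n-2-1) + (s-1) ≤ w (n-2-2*(s-1)-1) := by
        apply fold_desc hInd
        intro k hk
        refine ⟨by omega, by omega, by omega, by omega, ?_, ?_⟩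
        · rw [hv (n-2-2*k) (by omega) (by omega), hv (n-2-2*(k+1)) (by omega) (by omega)]
          split_ifs <;> omega
        · rw [hv (n-2-2*k+1) (by omega) (by omega), hv (n-2-2*(k+1)+1) (by omega) (by omega)]
          split_ifs <;> omega
      have mid : w (1-1) < w (2-1) := by
        apply digit_strict hInd (by omega) (by omega) (by omega) (by omega)
        · rw [hv 1 (by omega) (by omega), hv 2 (by omega) (by omega)]
          split_ifs <;> omega
        · rw [hv (1+1) (by omega) (by omega), hv (2+1) (by omega) (by omega)]
          split_ifs <;> omega
      have foldB : w (2-1) + (s-2) ≤ w (2+2*(s-2)-1) := by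
        apply fold_asc hInd
        intro k hk
        refine ⟨by omega, by omega, by omega, by omega, ?_, ?_⟩
        · rw [hv (2+2*k) (by omega) (by omega), hv (2+2*(k+1)) (by omega) (by omega)]
          split_ifs <;> omega
        · rw [hv (2+2*k+1) (by omega) (by omega), hv (2+2*(k+1)+1) (by omega) (by omega)]
          split_ifs <;> omega
      rw [show n-2-2*(s-1)-1 = 1-1 by omega] at foldA
      rw [show 2+2*(s-2)-1 = n-4 by omega] at foldB
      rw [show n-2-1 = n-3 by omega] at foldA
      omega
  have hv1 : π (n-3) = n-2 := by
    have := hval (n-3) (by omega) (by omega)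
    simp only [tauCF, tauF] at this; split_ifs at this <;> omega
  have hv2 : π (n-1) = n-1 := by
    have := hval (n-1) (by omega) (by omega)
    simp only [tauCF, tauF] at this; split_ifs at this <;> omega
  have hv3 : π n = n := by
    have := hval n (by omega) (by omega)
    simp only [tauCF, tauF] at this; split_ifs at this <;> omega
  have weak1 : w (n-4) ≤ w (n-2) := by
    have := digit_le hInd (i := n-3) (j := n-1) (by omega) (by omega) (by omega) (by omega)
      (by omega)
    rwa [show n-3-1 = n-4 by omega, show n-1-1 = n-2 by omega] at this
  have weak2 : w (n-2) ≤ w (n-1) := by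
    have := digit_le hInd (i := n-1) (j := n) (by omega) (by omega) (by omega) (by omega)
      (by omega)
    rwa [show n-1-1 = n-2 by omega] at this
  by_contra hcon
  push_neg at hcon
  have hfl : ⌊β⌋₊ ≤ n - 3 := by
    have h2 : (⌊β⌋₊ : ℝ) ≤ β := Nat.floor_le (by linarith)
    have h3 : (⌊β⌋₊ : ℝ) < ((n-3 : ℕ) : ℝ) + 1 := by
      push_cast [Nat.cast_sub (by omega : 3 ≤ n)]
      linarith
    have h4 : (⌊β⌋₊ : ℝ) < (((n-3 : ℕ) + 1 : ℕ) : ℝ) := by push_cast; linarith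
    have := Nat.cast_lt.mp h4
    omega
  have hd1 : w (n-4) ≤ ⌊β⌋₊ := Wset_digit_le hw (n-4)
  have hd2 : w (n-2) ≤ ⌊β⌋₊ := Wset_digit_le hw (n-2)
  have hd3 : w (n-1) ≤ ⌊β⌋₊ := Wset_digit_le hw (n-1)
  have hlex : LexLt (shift (n-1) w) (shift n w) := by
    have := lex_next hInd (i := n-1) (j := n) (by omega) (by omega) (by omega) (by omega)
      (by omega) (by rw [show n-1-1 = n-2 by omega]; omega)
    exact this
  exact L2 hβ hw (by rw [show n-1+1 = n by omega]; exact hlex) (by rw [betaExp_zero]; omega)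

theorem rRC_lb2 {n : ℕ} {π : ℕ → ℕ} (hn : 4 ≤ n)
    (hval : ∀ q, 1 ≤ q → q ≤ n → π q = rhoRCF n q) :
    ∀ β : ℝ, 1 < β → Allowed β n π → ((n:ℝ) - 2 + Real.sqrt (((n:ℝ) - 2)^2 + 4)) / 2 ≤ β := by
  intro β hβ hal
  obtain ⟨w, hw, hInd⟩ := hal
  have main : n-2 + w (n-2) ≤ w (n-3) := by
    rcases Nat.even_or_odd n with ⟨s, hs⟩ | ⟨s, hs⟩
    · have hv : ∀ q, 1 ≤ q → q ≤ n → π q = (if q % 2 = 0 then s+q/2 else s-(q-1)/2) := by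
        intro q h1 h2
        have := hval q h1 h2
        simp only [rhoRCF, rhoF] at this
        split_ifs at this ⊢ <;> omega
      have foldA : w (n-1-1) + (s-1) ≤ w (n-1-2*(s-1)-1) := by
        apply fold_desc hInd
        intro k hk
        refine ⟨by omega, by omega, by omega, by omega, ?_, ?_⟩
        · rw [hv (n-1-2*k) (by omega) (by omega), hv (n-1-2*(k+1)) (by omega) (by omega)]
          split_ifs <;> omega
        · rw [hv (n-1-2*k+1) (by omega) (by omega), hv (n-1-2*(k+1)+1) (by omega) (by omega)]
          split_ifs <;> omega
      have mid : w (1-1) < w (2-1) := by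
        apply digit_strict hInd (by omega) (by omega) (by omega) (by omega)
        · rw [hv 1 (by omega) (by omega), hv 2 (by omega) (by omega)]
          split_ifs <;> omega
        · rw [hv (1+1) (by omega) (by omega), hv (2+1) (by omega) (by omega)]
          split_ifs <;> omega
      have foldB : w (2-1) + (s-2) ≤ w (2+2*(s-2)-1) := by
        apply fold_asc hInd
        intro k hk
        refine ⟨by omega, by omega, by omega, by omega, ?_, ?_⟩
        · rw [hv (2+2*k) (by omega) (by omega), hv (2+2*(k+1)) (by omega) (by omega)]
          split_ifs <;> omega
        · rw [hv (2+2*k+1) (by omega) (by omega), hv (2+2*(k+1)+1) (by omega) (by omega)]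
          split_ifs <;> omega
      rw [show n-1-2*(s-1)-1 = 1-1 by omega] at foldA
      rw [show 2+2*(s-2)-1 = n-3 by omega] at foldB
      rw [show n-1-1 = n-2 by omega] at foldA
      omega
    · have hv : ∀ q, 1 ≤ q → q ≤ n → π q = (if q % 2 = 0 then s+1-q/2 else s+1+(q-1)/2) := by
        intro q h1 h2
        have := hval q h1 h2
        simp only [rhoRCF, rhoF] at this
        split_ifs at this ⊢ <;> omega
      have foldA : w (n-1-1) + (s-1) ≤ w (n-1-2*(s-1)-1) := by
        apply fold_desc hInd
        intro k hk
        refine ⟨by omega, by omega, by omega, by omega, ?_, ?_⟩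
        · rw [hv (n-1-2*k) (by omega) (by omega), hv (n-1-2*(k+1)) (by omega) (by omega)]
          split_ifs <;> omega
        · rw [hv (n-1-2*k+1) (by omega) (by omega), hv (n-1-2*(k+1)+1) (by omega) (by omega)]
          split_ifs <;> omega
      have mid : w (2-1) < w (1-1) := by
        apply digit_strict hInd (by omega) (by omega) (by omega) (by omega)
        · rw [hv 2 (by omega) (by omega), hv 1 (by omega) (by omega)]
          split_ifs <;> omega
        · rw [hv (2+1) (by omega) (by omega), hv (1+1) (by omega) (by omega)]
          split_ifs <;> omega
      have foldB : w (1-1) + (s-1) ≤ w (1+2*(s-1)-1) := by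
        apply fold_asc hInd
        intro k hk
        refine ⟨by omega, by omega, by omega, by omega, ?_, ?_⟩
        · rw [hv (1+2*k) (by omega) (by omega), hv (1+2*(k+1)) (by omega) (by omega)]
          split_ifs <;> omega
        · rw [hv (1+2*k+1) (by omega) (by omega), hv (1+2*(k+1)+1) (by omega) (by omega)]
          split_ifs <;> omega
      rw [show n-1-2*(s-1)-1 = 2-1 by omega] at foldA
      rw [show 1+2*(s-1)-1 = n-3 by omega] at foldB
      rw [show n-1-1 = n-2 by omega] at foldA
      omega
  have hv1 : π (n-2) = n-1 := by
    have := hval (n-2) (by omega) (by omega)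
    simp only [rhoRCF, rhoF] at this; split_ifs at this <;> omega
  have hv2 : π n = n := by
    have := hval n (by omega) (by omega)
    simp only [rhoRCF, rhoF] at this; split_ifs at this <;> omega
  have weak : w (n-2-1) ≤ w (n-1) := by
    have := digit_le hInd (i := n-2) (j := n) (by omega) (by omega) (by omega) (by omega)
      (by omega)
    rwa [show n - 1 = n-1 by omega] at this
  rw [show n-2-1 = n-3 by omega] at weak
  have hd1 : w (n-3) ≤ ⌊β⌋₊ := Wset_digit_le hw (n-3)
  have hd2 : w (n-1) ≤ ⌊β⌋₊ := Wset_digit_le hw (n-1)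
  apply floor_ge_root hn hβ (by omega)
  intro hfl'
  by_contra hz
  push_neg at hz
  have hz0 : betaExp β 1 = 0 := by omega
  have e1 : w (n-3) = betaExp β 0 := by rw [betaExp_zero]; omega
  have e2 : w (n-1) = betaExp β 0 := by rw [betaExp_zero]; omega
  have u1 : w (n-3+1) ≤ betaExp β 1 := Wset_second hw e1
  have u2 : w (n-1+1) ≤ betaExp β 1 := Wset_second hw e2
  rw [show n-3+1 = n-2 by omega] at u1
  rw [show n-1+1 = n by omega] at u2
  have hlex : LexLt (shift (n-2) w) (shift n w) := by
    have := lex_next hInd (i := n-2) (j := n) (by omega) (by omega) (by omega) (by omega)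
      (by omega) (by rw [show n-2-1 = n-3 by omega]; omega)
    exact this
  have heads2 : (shift (n-2) w) 0 = (shift n w) 0 := by
    simp only [shift, Nat.zero_add]; omega
  have t3 := lexLt_tail hlex heads2
  rw [shift_shift, shift_shift] at t3
  rw [show n-2+1 = n-1 by omega] at t3
  exact L2' hβ hw (k := n-1) (by rw [show n-1+2 = n+1 by omega]; exact t3)
    (by rw [betaExp_zero]; omega) (by rw [show n-1+1 = n by omega]; omega)

theorem tau_lb2 {n : ℕ} {π : ℕ → ℕ} (hn : 4 ≤ n)
    (hval : ∀ q, 1 ≤ q → q ≤ n → π q = tauF n q) :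
    ∀ β : ℝ, 1 < β → Allowed β n π → ((n:ℝ) - 2 + Real.sqrt (((n:ℝ) - 2)^2 + 4)) / 2 ≤ β := by
  intro β hβ hal
  obtain ⟨w, hw, hInd⟩ := hal
  have main : n-3 + w (n-4) ≤ w (n-3) := by
    rcases Nat.even_or_odd n with ⟨s, hs⟩ | ⟨s, hs⟩
    · have hv : ∀ q, 1 ≤ q → q ≤ n → π q = (if q = n then 1 else if q % 2 = 0 then s+1+q/2 else s+1-(q-1)/2) := by
        intro q h1 h2
        have := hval q h1 h2
        simp only [tauF] at this
        split_ifs at this ⊢ <;> omega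
      have foldA : w (n-3-1) + (s-2) ≤ w (n-3-2*(s-2)-1) := by
        apply fold_desc hInd
        intro k hk
        refine ⟨by omega, by omega, by omega, by omega, ?_, ?_⟩
        · rw [hv (n-3-2*k) (by omega) (by omega), hv (n-3-2*(k+1)) (by omega) (by omega)]
          split_ifs <;> omega
        · rw [hv (n-3-2*k+1) (by omega) (by omega), hv (n-3-2*(k+1)+1) (by omega) (by omega)]
          split_ifs <;> omega
      have mid : w (1-1) < w (2-1) := by
        apply digit_strict hInd (by omega) (by omega) (by omega) (by omega)
        · rw [hv 1 (by omega) (by omega), hv 2 (by omega) (by omega)]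
          split_ifs <;> omega
        · rw [hv (1+1) (by omega) (by omega), hv (2+1) (by omega) (by omega)]
          split_ifs <;> omega
      have foldB : w (2-1) + (s-2) ≤ w (2+2*(s-2)-1) := by
        apply fold_asc hInd
        intro k hk
        refine ⟨by omega, by omega, by omega, by omega, ?_, ?_⟩
        · rw [hv (2+2*k) (by omega) (by omega), hv (2+2*(k+1)) (by omega) (by omega)]
          split_ifs <;> omega
        · rw [hv (2+2*k+1) (by omega) (by omega), hv (2+2*(k+1)+1) (by omega) (by omega)]
          split_ifs <;> omega
      rw [show n-3-2*(s-2)-1 = 1-1 by omega] at foldA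
      rw [show 2+2*(s-2)-1 = n-3 by omega] at foldB
      rw [show n-3-1 = n-4 by omega] at foldA
      omega
    · have hv : ∀ q, 1 ≤ q → q ≤ n → π q = (if q = n then 1 else if q % 2 = 0 then s+2-q/2 else s+2+(q-1)/2) := by
        intro q h1 h2
        have := hval q h1 h2
        simp only [tauF] at this
        split_ifs at this ⊢ <;> omega
      have foldA : w (n-3-1) + (s-2) ≤ w (n-3-2*(s-2)-1) := by
        apply fold_desc hInd
        intro k hk
        refine ⟨by omega, by omega, by omega, by omega, ?_, ?_⟩
        · rw [hv (n-3-2*k) (by omega) (by omega), hv (n-3-2*(k+1)) (by omega) (by omega)]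
          split_ifs <;> omega
        · rw [hv (n-3-2*k+1) (by omega) (by omega), hv (n-3-2*(k+1)+1) (by omega) (by omega)]
          split_ifs <;> omega
      have mid : w (2-1) < w (1-1) := by
        apply digit_strict hInd (by omega) (by omega) (by omega) (by omega)
        · rw [hv 2 (by omega) (by omega), hv 1 (by omega) (by omega)]
          split_ifs <;> omega
        · rw [hv (2+1) (by omega) (by omega), hv (1+1) (by omega) (by omega)]
          split_ifs <;> omega
      have foldB : w (1-1) + (s-1) ≤ w (1+2*(s-1)-1) := by
        apply fold_asc hInd
        intro k hk
        refine ⟨by omega, by omega, by omega, by omega, ?_, ?_⟩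
        · rw [hv (1+2*k) (by omega) (by omega), hv (1+2*(k+1)) (by omega) (by omega)]
          split_ifs <;> omega
        · rw [hv (1+2*k+1) (by omega) (by omega), hv (1+2*(k+1)+1) (by omega) (by omega)]
          split_ifs <;> omega
      rw [show n-3-2*(s-2)-1 = 2-1 by omega] at foldA
      rw [show 1+2*(s-1)-1 = n-3 by omega] at foldB
      rw [show n-3-1 = n-4 by omega] at foldA
      omega
  have hv1 : π n = 1 := by
    have := hval n (by omega) (by omega)
    simp only [tauF] at this; split_ifs at this <;> omega
  have hv2 : π (n-1) = 2 := by
    have := hval (n-1) (by omega) (by omega)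
    simp only [tauF] at this; split_ifs at this <;> omega
  have hv3 : π (n-3) = 3 := by
    have := hval (n-3) (by omega) (by omega)
    simp only [tauF] at this; split_ifs at this <;> omega
  have weak1 : w (n-1) ≤ w (n-2) := by
    have := digit_le hInd (i := n) (j := n-1) (by omega) (by omega) (by omega) (by omega)
      (by omega)
    rwa [show n-1-1 = n-2 by omega] at this
  have weak2 : w (n-2) ≤ w (n-4) := by
    have := digit_le hInd (i := n-1) (j := n-3) (by omega) (by omega) (by omega) (by omega)
      (by omega)
    rwa [show n-1-1 = n-2 by omega, show n-3-1 = n-4 by omega] at this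
  have L3trig : w (n-2) = 0 → False := by
    intro h20
    have hlex : LexLt (shift n w) (shift (n-1) w) := by
      have := lex_next hInd (i := n) (j := n-1) (by omega) (by omega) (by omega) (by omega)
        (by omega) (by rw [show n - 1 = n-1 by omega, show n-1-1 = n-2 by omega]; omega)
      exact this
    exact L3 (k := n-1) (by rw [show n-1+1 = n by omega]; exact hlex) (by omega)
  have hb : 1 ≤ w (n-4) := by
    by_contra hb0
    exact L3trig (by omega)
  have hd1 : w (n-3) ≤ ⌊β⌋₊ := Wset_digit_le hw (n-3)
  apply floor_ge_root hn hβ (by omega)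
  intro hfl'
  by_contra hz
  push_neg at hz
  have e1 : w (n-3) = betaExp β 0 := by rw [betaExp_zero]; omega
  have u1 : w (n-3+1) ≤ betaExp β 1 := Wset_second hw e1
  rw [show n-3+1 = n-2 by omega] at u1
  exact L3trig (by omega)

-- ### Section 11 : upper bound words
theorem rhoR_allowed {n : ℕ} {π : ℕ → ℕ} (hn : 4 ≤ n) (hperm : IsPerm n π)
    (hval : ∀ q, 1 ≤ q → q ≤ n → π q = rhoRF n q) :
    ∀ β : ℝ, ((n:ℝ) - 2) < β → Allowed β n π := by
  intro β hβ
  have hn4 : (4:ℝ) ≤ (n:ℝ) := by exact_mod_cast hn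
  have hβ1 : (1:ℝ) < β := by linarith
  have hπn : π n = 1 := by
    have := hval n (by omega) (by omega)
    simp only [rhoRF, rhoF] at this; split_ifs at this <;> omega
  have hπn1 : π (n-1) = n := by
    have := hval (n-1) (by omega) (by omega)
    simp only [rhoRF, rhoF] at this; split_ifs at this <;> omega
  have hb : ∀ q, 1 ≤ q → q ≤ n-1 → 2 ≤ π q ∧ π q ≤ n := by
    intro q h1 h2
    have := hval q h1 (by omega)
    simp only [rhoRF, rhoF] at this; split_ifs at this <;> omega
  set w : ℕ → ℕ := fun i => if i + 1 ≤ n then π (i+1) - 2 else 0 with hwdef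
  have hwq : ∀ q, 1 ≤ q → q ≤ n-1 → w (q-1) = π q - 2 := by
    intro q h1 h2
    simp only [hwdef]
    rw [if_pos (by omega), show q-1+1 = q by omega]
  have hwn2 : w (n-2) = n-2 := by
    simp only [hwdef]
    rw [if_pos (by omega), show n-2+1 = n-1 by omega, hπn1]
  have hwzero : ∀ i, n-1 ≤ i → w i = 0 := by
    intro i hi
    simp only [hwdef]
    rcases eq_or_ne i (n-1) with rfl | hne
    · rw [if_pos (by omega), show n-1+1 = n by omega, hπn]
    · rw [if_neg (by omega)]
  have hwsmall : ∀ i, i ≠ n-2 → w i ≤ n-3 := by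
    intro i hi
    simp only [hwdef]
    split_ifs with h
    · rcases eq_or_ne (i+1) n with he | hne2
      · rw [he, hπn]; omega
      · have h2 := hb (i+1) (by omega) (by omega)
        have hne : π (i+1) ≠ n := by
          intro hc
          have : i + 1 = n - 1 := hperm.2.1 ⟨by omega, by omega⟩ ⟨by omega, by omega⟩
            (by rw [hc, hπn1])
          omega
        omega
    · omega
  have hwle : ∀ i, w i ≤ n-2 := by
    intro i
    rcases eq_or_ne i (n-2) with rfl | h
    · omega
    · have := hwsmall i h; omega
  refine ⟨w, ⟨⟨n, fun i => by have := hwle i; omega⟩, ?_⟩, ?_⟩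
  · -- Wset
    intro k
    rcases Nat.lt_or_ge ⌊β⌋₊ (n-1) with hfl | hfl
    · have hfl' : ⌊β⌋₊ = n-2 := by
        have h1 : ((n-2:ℕ):ℝ) ≤ β := by rw [cast_sub_two hn]; linarith
        have := Nat.le_floor h1; omega
      rcases eq_or_ne k (n-2) with rfl | hk
      · apply adm_max_zero hβ1
        · rw [hfl', cast_sub_two hn]; exact hβ
        · simp only [shift, Nat.zero_add, betaExp_zero, hfl']; exact hwn2
        · intro i hi; simp only [shift]; exact hwzero _ (by omega)
      · apply adm_head
        simp only [shift, Nat.zero_add, betaExp_zero, hfl']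
        have := hwsmall k hk; omega
    · apply adm_head
      simp only [shift, Nat.zero_add, betaExp_zero]
      have := hwle k; omega
  · -- Induces
    apply induces_of hperm
    intro i hi j hj hlt
    obtain ⟨hi1, hi2⟩ := hi
    obtain ⟨hj1, hj2⟩ := hj
    rcases eq_or_ne j n with hjn | hjn
    · exfalso
      rw [hjn, hπn] at hlt
      have := (hperm.1 ⟨hi1, hi2⟩).1
      omega
    · rcases eq_or_ne i n with hin | hin
      · rw [hin]
        refine lexLt_zero (fun t => ?_) (t := n-1-j) ?_
        · simp only [shift]; exact hwzero _ (by omega)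
        · simp only [shift]
          rw [show n-1-j + (j-1) = n-2 by omega, hwn2]
          omega
      · apply lexLt_head
        simp only [shift, Nat.zero_add]
        rw [hwq i hi1 (by omega), hwq j hj1 (by omega)]
        have h2i := hb i hi1 (by omega)
        omega

theorem tauC_allowed {n : ℕ} {π : ℕ → ℕ} (hn : 4 ≤ n) (hperm : IsPerm n π)
    (hval : ∀ q, 1 ≤ q → q ≤ n → π q = tauCF n q) :
    ∀ β : ℝ, ((n:ℝ) - 2) < β → Allowed β n π := by
  intro β hβ
  have hn4 : (4:ℝ) ≤ (n:ℝ) := by exact_mod_cast hn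
  have hβ1 : (1:ℝ) < β := by linarith
  have hπn : π n = n := by
    have := hval n (by omega) (by omega)
    simp only [tauCF, tauF] at this; split_ifs at this <;> omega
  have hπn1 : π (n-1) = n-1 := by
    have := hval (n-1) (by omega) (by omega)
    simp only [tauCF, tauF] at this; split_ifs at this <;> omega
  have hbA : ∀ q, 1 ≤ q → q ≤ n-2 → 1 ≤ π q ∧ π q ≤ n-2 := by
    intro q h1 h2
    have := hval q h1 (by omega)
    simp only [tauCF, tauF] at this; split_ifs at this <;> omega
  set w : ℕ → ℕ := fun i => if i + 1 ≤ n-2 then π (i+1) - 1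
    else if i = n-2 then n-3 else if i = n-1 then n-2 else 0 with hwdef
  have hwq : ∀ q, 1 ≤ q → q ≤ n-2 → w (q-1) = π q - 1 := by
    intro q h1 h2
    simp only [hwdef]
    rw [if_pos (by omega), show q-1+1 = q by omega]
  have hwn2 : w (n-2) = n-3 := by
    simp only [hwdef]; split_ifs <;> omega
  have hwn1 : w (n-1) = n-2 := by
    simp only [hwdef]; split_ifs <;> omega
  have hwzero : ∀ i, n ≤ i → w i = 0 := by
    intro i hi
    simp only [hwdef]; split_ifs <;> omega
  have hwsmall : ∀ i, i ≠ n-1 → w i ≤ n-3 := by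
    intro i hi
    simp only [hwdef]
    split_ifs with h1 h2 h3 <;> try omega
    have := hbA (i+1) (by omega) (by omega); omega
  have hwle : ∀ i, w i ≤ n-2 := by
    intro i
    rcases eq_or_ne i (n-1) with rfl | h
    · omega
    · have := hwsmall i h; omega
  refine ⟨w, ⟨⟨n, fun i => by have := hwle i; omega⟩, ?_⟩, ?_⟩
  · intro k
    rcases Nat.lt_or_ge ⌊β⌋₊ (n-1) with hfl | hfl
    · have hfl' : ⌊β⌋₊ = n-2 := by
        have h1 : ((n-2:ℕ):ℝ) ≤ β := by rw [cast_sub_two hn]; linarith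
        have := Nat.le_floor h1; omega
      rcases eq_or_ne k (n-1) with rfl | hk
      · apply adm_max_zero hβ1
        · rw [hfl', cast_sub_two hn]; exact hβ
        · simp only [shift, Nat.zero_add, betaExp_zero, hfl']; exact hwn1
        · intro i hi; simp only [shift]; exact hwzero _ (by omega)
      · apply adm_head
        simp only [shift, Nat.zero_add, betaExp_zero, hfl']
        have := hwsmall k hk; omega
    · apply adm_head
      simp only [shift, Nat.zero_add, betaExp_zero]
      have := hwle k; omega
  · apply induces_of hperm
    intro i hi j hj hlt
    obtain ⟨hi1, hi2⟩ := hi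
    obtain ⟨hj1, hj2⟩ := hj
    have hiv := (hperm.1 ⟨hi1, hi2⟩)
    rcases eq_or_ne j n with hjn | hjn
    · -- j = n : i ≤ n-1, head w(i-1) ≤ n-3 < n-2
      rw [hjn]
      apply lexLt_head
      simp only [shift, Nat.zero_add]
      rw [show n - 1 = n-1 by omega, hwn1]
      have hile : i ≠ n := by
        intro hc; rw [hc, hjn, hπn] at hlt; omega
      have := hwsmall (i-1) (by omega)
      omega
    · rcases eq_or_ne j (n-1) with hjn1 | hjn1
      · -- j = n-1
        rw [hjn1]
        have hile : i ≤ n-2 := by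
          rcases eq_or_ne i n with hc | hc
          · rw [hc, hjn1, hπn1, hπn] at hlt; omega
          · rcases eq_or_ne i (n-1) with hc1 | hc1
            · rw [hc1, hπn1, hjn1, hπn1] at hlt; omega
            · omega
        have hπile : π i ≤ n-2 := (hbA i hi1 hile).2
        rcases eq_or_ne (π i) (n-2) with he | hne
        · -- second letter comparison
          refine ⟨1, fun t ht => ?_, ?_⟩
          · interval_cases t
            simp only [shift, Nat.zero_add]
            rw [hwq i hi1 hile, show n-1-1 = n-2 by omega, hwn2, he]
            omega
          · simp only [shift]
            rw [show 1 + (i-1) = i by omega, show 1 + (n-1-1) = n-1 by omega, hwn1]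
            have := hwsmall i (by omega)
            omega
        · apply lexLt_head
          simp only [shift, Nat.zero_add]
          rw [hwq i hi1 hile, show n-1-1 = n-2 by omega, hwn2]
          omega
      · -- j ≤ n-2
        have hjle : j ≤ n-2 := by omega
        have hπj := hbA j hj1 hjle
        have hile : i ≤ n-2 := by
          rcases eq_or_ne i n with hc | hc
          · rw [hc, hπn] at hlt; omega
          · rcases eq_or_ne i (n-1) with hc1 | hc1
            · rw [hc1, hπn1] at hlt; omega
            · omega
        have hπi := hbA i hi1 hile
        apply lexLt_head
        simp only [shift, Nat.zero_add]
        rw [hwq i hi1 hile, hwq j hj1 hjle]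
        omega

theorem rhoRC_allowed {n : ℕ} {π : ℕ → ℕ} (hn : 4 ≤ n) (hperm : IsPerm n π)
    (hval : ∀ q, 1 ≤ q → q ≤ n → π q = rhoRCF n q) :
    ∀ β : ℝ, ((n:ℝ) - 2 + Real.sqrt (((n:ℝ) - 2)^2 + 4)) / 2 < β → Allowed β n π := by
  intro β hβ
  have hn4 : (4:ℝ) ≤ (n:ℝ) := by exact_mod_cast hn
  have hc0 : (0:ℝ) < (n:ℝ) - 2 := by linarith
  have hβn2 : (n:ℝ) - 2 < β := lt_trans (root_gt hc0) hβ
  have hβ1 : (1:ℝ) < β := by linarith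
  have hπn2 : π (n-2) = n-1 := by
    have := hval (n-2) (by omega) (by omega)
    simp only [rhoRCF, rhoF] at this; split_ifs at this <;> omega
  have hπn1 : π (n-1) = 1 := by
    have := hval (n-1) (by omega) (by omega)
    simp only [rhoRCF, rhoF] at this; split_ifs at this <;> omega
  have hπn : π n = n := by
    have := hval n (by omega) (by omega)
    simp only [rhoRCF, rhoF] at this; split_ifs at this <;> omega
  have hbA : ∀ q, 1 ≤ q → q ≤ n-3 → 2 ≤ π q ∧ π q ≤ n-2 := by
    intro q h1 h2
    have := hval q h1 (by omega)
    simp only [rhoRCF, rhoF] at this; split_ifs at this <;> omega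
  set w : ℕ → ℕ := fun i => if i+1 ≤ n-3 then π (i+1) - 1 else if i = n-3 then n-2
    else if i = n-2 then 0 else if i = n-1 then n-2 else if i = n then 0
    else if i = n+1 then n-2 else if i = n+2 then 1 else 0 with hwdef
  have hwq : ∀ q, 1 ≤ q → q ≤ n-3 → w (q-1) = π q - 1 := by
    intro q h1 h2
    simp only [hwdef]
    rw [if_pos (by omega), show q-1+1 = q by omega]
  have hw3 : w (n-3) = n-2 := by simp only [hwdef]; split_ifs <;> omega
  have hw2 : w (n-2) = 0 := by simp only [hwdef]; split_ifs <;> omega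
  have hw1 : w (n-1) = n-2 := by simp only [hwdef]; split_ifs <;> omega
  have hw0 : w n = 0 := by simp only [hwdef]; split_ifs <;> omega
  have hwp1 : w (n+1) = n-2 := by simp only [hwdef]; split_ifs <;> omega
  have hwp2 : w (n+2) = 1 := by simp only [hwdef]; split_ifs <;> omega
  have hwz : ∀ i, n+3 ≤ i → w i = 0 := by
    intro i hi; simp only [hwdef]; split_ifs <;> omega
  have hwA : ∀ k, k ≤ n-4 → w k ≤ n-3 := by
    intro k hk
    have h1 := hwq (k+1) (by omega) (by omega)
    rw [show k+1-1 = k by omega] at h1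
    have := hbA (k+1) (by omega) (by omega)
    omega
  have hwle : ∀ i, w i ≤ n-2 := by
    intro i
    rcases (show i ≤ n-4 ∨ i = n-3 ∨ i = n-2 ∨ i = n-1 ∨ i = n ∨ i = n+1 ∨ i = n+2 ∨
      n+3 ≤ i by omega) with h|h|h|h|h|h|h|h
    · have := hwA i h; omega
    · rw [h, hw3]
    · rw [h, hw2]; omega
    · rw [h, hw1]
    · rw [h, hw0]; omega
    · rw [h, hwp1]
    · rw [h, hwp2]; omega
    · rw [hwz i h]; omega
  refine ⟨w, ⟨⟨n, fun i => by have := hwle i; omega⟩, ?_⟩, ?_⟩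
  · -- Wset
    intro k
    rcases Nat.lt_or_ge ⌊β⌋₊ (n-1) with hfl | hfl
    · have hfl' : ⌊β⌋₊ = n-2 := by
        have h1 : ((n-2:ℕ):ℝ) ≤ β := by rw [cast_sub_two hn]; linarith
        have := Nat.le_floor h1; omega
      have hA1 : (1:ℝ) < betaA β 1 := by
        have e : betaA β 1 = β * (β - (⌊β⌋₊ : ℝ)) := rfl
        rw [e, hfl', cast_sub_two hn]
        exact root_ub hc0 hβ
      have ha1 : 1 ≤ betaExp β 1 := Nat.le_floor (by exact_mod_cast le_of_lt hA1)
      rcases (show k ≤ n-4 ∨ k = n-3 ∨ k = n-2 ∨ k = n-1 ∨ k = n ∨ k = n+1 ∨ k = n+2 ∨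
        n+3 ≤ k by omega) with h|h|h|h|h|h|h|h
      · apply adm_head
        simp only [shift, Nat.zero_add, betaExp_zero, hfl']
        have := hwA k h; omega
      · subst h
        apply adm_second
        · simp only [shift, Nat.zero_add, betaExp_zero, hfl']; exact hw3
        · simp only [shift]
          rw [show 1 + (n-3) = n-2 by omega, hw2]; omega
      · subst h; apply adm_head
        simp only [shift, Nat.zero_add, betaExp_zero, hfl']
        rw [hw2]; omega
      · subst h
        apply adm_second
        · simp only [shift, Nat.zero_add, betaExp_zero, hfl']; exact hw1
        · simp only [shift]
          rw [show 1 + (n-1) = n by omega, hw0]; omega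
      · subst h; apply adm_head
        simp only [shift, Nat.zero_add, betaExp_zero, hfl']
        rw [hw0]; omega
      · subst h
        apply adm_max_one hβ1 hA1
        · simp only [shift, Nat.zero_add, betaExp_zero, hfl']; exact hwp1
        · simp only [shift]
          rw [show 1 + (n+1) = n+2 by omega, hwp2]
        · intro i hi; simp only [shift]; exact hwz _ (by omega)
      · subst h; apply adm_head
        simp only [shift, Nat.zero_add, betaExp_zero, hfl']
        rw [hwp2]; omega
      · apply adm_head
        simp only [shift, Nat.zero_add, betaExp_zero, hfl']
        rw [hwz k h]; omega
    · apply adm_head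
      simp only [shift, Nat.zero_add, betaExp_zero]
      have := hwle k; omega
  · -- Induces
    apply induces_of hperm
    intro i hi j hj hlt
    obtain ⟨hi1, hi2⟩ := hi
    obtain ⟨hj1, hj2⟩ := hj
    have hiv := hperm.1 ⟨hi1, hi2⟩
    have hjv := hperm.1 ⟨hj1, hj2⟩
    simp only [Set.mem_Icc] at hiv hjv
    rcases eq_or_ne i (n-1) with hi_ | hi_
    · -- i = n-1, minimal
      have hj_ : j ≠ n-1 := by
        intro hc; rw [hi_, hc] at hlt; omega
      rw [hi_]
      apply lexLt_head
      simp only [shift, Nat.zero_add]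
      rw [show n-1-1 = n-2 by omega, hw2]
      rcases (show j ≤ n-3 ∨ j = n-2 ∨ j = n by omega) with h|h|h
      · rw [hwq j hj1 h]
        have := hbA j hj1 h; omega
      · rw [h, show n-2-1 = n-3 by omega, hw3]; omega
      · rw [h, show n-1 = n-1 by omega, hw1]; omega
    · rcases eq_or_ne j n with hj_ | hj_
      · rcases eq_or_ne i (n-2) with hii | hii
        · -- the depth-3 comparison
          rw [hii, hj_]
          refine ⟨3, fun t ht => ?_, ?_⟩
          · interval_cases t <;> simp only [shift]
            · rw [show 0 + (n-2-1) = n-3 by omega, show 0 + (n-1) = n-1 by omega, hw3, hw1]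
            · rw [show 1 + (n-2-1) = n-2 by omega, show 1 + (n-1) = n by omega, hw2, hw0]
            · rw [show 2 + (n-2-1) = n-1 by omega, show 2 + (n-1) = n+1 by omega, hw1, hwp1]
          · simp only [shift]
            rw [show 3 + (n-2-1) = n by omega, show 3 + (n-1) = n+2 by omega, hw0, hwp2]
            omega
        · -- i ∈ A
          have hile : i ≤ n-3 := by
            rcases eq_or_ne i n with hc | hc
            · rw [hc, hj_, hπn] at hlt; omega
            · omega
          rw [hj_]
          apply lexLt_head
          simp only [shift, Nat.zero_add]
          rw [hwq i hi1 hile, show n-1 = n-1 by omega, hw1]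
          have := hbA i hi1 hile
          omega
      · -- j ≠ n, j ≠ n-1 (j = n-1 impossible since π j > π i ≥ 1)
        have hj1_ : j ≠ n-1 := by
          intro hc; rw [hc, hπn1] at hlt; omega
        have hile : i ≤ n-3 := by
          rcases eq_or_ne i n with hc | hc
          · exfalso; rw [hc, hπn] at hlt; omega
          · rcases eq_or_ne i (n-2) with hc2 | hc2
            · exfalso
              rw [hc2, hπn2] at hlt
              have hje : π j = n := by omega
              have : j = n := hperm.2.1 ⟨hj1, hj2⟩ ⟨by omega, by omega⟩ (by rw [hje, hπn])
              exact hj_ this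
            · omega
        have hπi := hbA i hi1 hile
        rcases eq_or_ne j (n-2) with hjj | hjj
        · rw [hjj]
          apply lexLt_head
          simp only [shift, Nat.zero_add]
          rw [hwq i hi1 hile, show n-2-1 = n-3 by omega, hw3]
          omega
        · have hjle : j ≤ n-3 := by omega
          have hπj := hbA j hj1 hjle
          apply lexLt_head
          simp only [shift, Nat.zero_add]
          rw [hwq i hi1 hile, hwq j hj1 hjle]
          omega

theorem tau_allowed {n : ℕ} {π : ℕ → ℕ} (hn : 4 ≤ n) (hperm : IsPerm n π)
    (hval : ∀ q, 1 ≤ q → q ≤ n → π q = tauF n q) :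
    ∀ β : ℝ, ((n:ℝ) - 2 + Real.sqrt (((n:ℝ) - 2)^2 + 4)) / 2 < β → Allowed β n π := by
  intro β hβ
  have hn4 : (4:ℝ) ≤ (n:ℝ) := by exact_mod_cast hn
  have hc0 : (0:ℝ) < (n:ℝ) - 2 := by linarith
  have hβn2 : (n:ℝ) - 2 < β := lt_trans (root_gt hc0) hβ
  have hβ1 : (1:ℝ) < β := by linarith
  have hπ2 : π (n-2) = n := by
    have := hval (n-2) (by omega) (by omega)
    simp only [tauF] at this; split_ifs at this <;> omega
  have hπ1 : π (n-1) = 2 := by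
    have := hval (n-1) (by omega) (by omega)
    simp only [tauF] at this; split_ifs at this <;> omega
  have hπ0 : π n = 1 := by
    have := hval n (by omega) (by omega)
    simp only [tauF] at this; split_ifs at this <;> omega
  have hbA : ∀ q, 1 ≤ q → q ≤ n-3 → 3 ≤ π q ∧ π q ≤ n-1 := by
    intro q h1 h2
    have := hval q h1 (by omega)
    simp only [tauF] at this; split_ifs at this <;> omega
  set w : ℕ → ℕ := fun i => if i = n-2 then 1 else if i+1 ≤ n then π (i+1) - 2 else 0
    with hwdef
  have hwq : ∀ q, 1 ≤ q → q ≤ n-3 → w (q-1) = π q - 2 := by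
    intro q h1 h2
    simp only [hwdef]
    rw [if_neg (by omega), if_pos (by omega), show q-1+1 = q by omega]
  have hw3 : w (n-3) = n-2 := by
    simp only [hwdef]
    rw [if_neg (by omega), if_pos (by omega), show n-3+1 = n-2 by omega, hπ2]
  have hw2 : w (n-2) = 1 := by
    simp only [hwdef]; simp
  have hwzero : ∀ i, n-1 ≤ i → w i = 0 := by
    intro i hi
    simp only [hwdef]
    rcases eq_or_ne i (n-1) with rfl | hne
    · rw [if_neg (by omega), if_pos (by omega), show n-1+1 = n by omega, hπ0]
    · rw [if_neg (by omega), if_neg (by omega)]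
  have hwA : ∀ k, k ≤ n-4 → w k ≤ n-3 := by
    intro k hk
    have h1 := hwq (k+1) (by omega) (by omega)
    rw [show k+1-1 = k by omega] at h1
    have := hbA (k+1) (by omega) (by omega)
    omega
  have hpos : ∀ t, t ≤ n-2 → 1 ≤ w t := by
    intro t ht
    rcases (show t ≤ n-4 ∨ t = n-3 ∨ t = n-2 by omega) with h|h|h
    · have h1 := hwq (t+1) (by omega) (by omega)
      rw [show t+1-1 = t by omega] at h1
      have := hbA (t+1) (by omega) (by omega)
      omega
    · rw [h, hw3]; omega
    · rw [h, hw2]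
  have hwle : ∀ i, w i ≤ n-2 := by
    intro i
    rcases (show i ≤ n-4 ∨ i = n-3 ∨ i = n-2 ∨ n-1 ≤ i by omega) with h|h|h|h
    · have := hwA i h; omega
    · rw [h, hw3]
    · rw [h, hw2]; omega
    · rw [hwzero i h]; omega
  refine ⟨w, ⟨⟨n, fun i => by have := hwle i; omega⟩, ?_⟩, ?_⟩
  · intro k
    rcases Nat.lt_or_ge ⌊β⌋₊ (n-1) with hfl | hfl
    · have hfl' : ⌊β⌋₊ = n-2 := by
        have h1 : ((n-2:ℕ):ℝ) ≤ β := by rw [cast_sub_two hn]; linarith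
        have := Nat.le_floor h1; omega
      have hA1 : (1:ℝ) < betaA β 1 := by
        have e : betaA β 1 = β * (β - (⌊β⌋₊ : ℝ)) := rfl
        rw [e, hfl', cast_sub_two hn]
        exact root_ub hc0 hβ
      rcases (show k ≤ n-4 ∨ k = n-3 ∨ k = n-2 ∨ n-1 ≤ k by omega) with h|h|h|h
      · apply adm_head
        simp only [shift, Nat.zero_add, betaExp_zero, hfl']
        have := hwA k h; omega
      · subst h
        apply adm_max_one hβ1 hA1
        · simp only [shift, Nat.zero_add, betaExp_zero, hfl']; exact hw3
        · simp only [shift]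
          rw [show 1 + (n-3) = n-2 by omega, hw2]
        · intro i hi; simp only [shift]; exact hwzero _ (by omega)
      · subst h; apply adm_head
        simp only [shift, Nat.zero_add, betaExp_zero, hfl']
        rw [hw2]; omega
      · apply adm_head
        simp only [shift, Nat.zero_add, betaExp_zero, hfl']
        rw [hwzero k h]; omega
    · apply adm_head
      simp only [shift, Nat.zero_add, betaExp_zero]
      have := hwle k; omega
  · apply induces_of hperm
    intro i hi j hj hlt
    obtain ⟨hi1, hi2⟩ := hi
    obtain ⟨hj1, hj2⟩ := hj
    have hiv := hperm.1 ⟨hi1, hi2⟩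
    have hjv := hperm.1 ⟨hj1, hj2⟩
    simp only [Set.mem_Icc] at hiv hjv
    rcases eq_or_ne i n with hi_ | hi_
    · -- i = n, minimal
      have hj_ : j ≠ n := by intro hc; rw [hi_, hc] at hlt; omega
      rw [hi_]
      apply lexLt_head
      simp only [shift, Nat.zero_add]
      rw [show n-1 = n-1 by omega, hwzero (n-1) (by omega)]
      exact hpos (j-1) (by omega)
    · rcases eq_or_ne i (n-1) with hi1_ | hi1_
      · -- i = n-1, π i = 2
        have hπj : 2 < π j := by rw [hi1_, hπ1] at hlt; exact hlt
        have hj_ : j ≠ n := by intro hc; rw [hc, hπ0] at hπj; omega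
        have hj1_ : j ≠ n-1 := by intro hc; rw [hc, hπ1] at hπj; omega
        rw [hi1_]
        rcases eq_or_ne j (n-2) with hjj | hjj
        · rw [hjj]
          apply lexLt_head
          simp only [shift, Nat.zero_add]
          rw [show n-1-1 = n-2 by omega, show n-2-1 = n-3 by omega, hw2, hw3]
          omega
        · have hjle : j ≤ n-3 := by omega
          have hπjb := hbA j hj1 hjle
          rcases eq_or_ne (π j) 3 with he | hne
          · refine ⟨1, fun t ht => ?_, ?_⟩
            · interval_cases t
              simp only [shift, Nat.zero_add]
              rw [show n-1-1 = n-2 by omega, hw2, hwq j hj1 hjle, he]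
            · simp only [shift]
              rw [show 1 + (n-1-1) = n-1 by omega, show 1 + (j-1) = j by omega,
                hwzero (n-1) (by omega)]
              exact hpos j (by omega)
          · apply lexLt_head
            simp only [shift, Nat.zero_add]
            rw [show n-1-1 = n-2 by omega, hw2, hwq j hj1 hjle]
            omega
      · -- i ≤ n-3 (i = n-2 impossible)
        have hile : i ≤ n-3 := by
          rcases eq_or_ne i (n-2) with hc | hc
          · exfalso; rw [hc, hπ2] at hlt; omega
          · omega
        have hπib := hbA i hi1 hile
        rcases eq_or_ne j (n-2) with hjj | hjj
        · rw [hjj]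
          apply lexLt_head
          simp only [shift, Nat.zero_add]
          rw [hwq i hi1 hile, show n-2-1 = n-3 by omega, hw3]
          omega
        · have hj_ : j ≠ n := by intro hc; rw [hc, hπ0] at hlt; omega
          have hj1_ : j ≠ n-1 := by intro hc; rw [hc, hπ1] at hlt; omega
          have hjle : j ≤ n-3 := by omega
          have hπjb := hbA j hj1 hjle
          apply lexLt_head
          simp only [shift, Nat.zero_add]
          rw [hwq i hi1 hile, hwq j hj1 hjle]
          omega

theorem Bperm_eq {n : ℕ} {π : ℕ → ℕ} {c : ℝ} (hc : 1 ≤ c)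
    (hlb : ∀ β : ℝ, 1 < β → Allowed β n π → c ≤ β)
    (hub : ∀ β : ℝ, c < β → Allowed β n π) : Bperm n π = c := by
  apply sInf_eq_of_set
  · rintro β ⟨h1, h2⟩; exact hlb β h1 h2
  · intro β hβ; exact ⟨by linarith, hub β hβ⟩


/-- Let `n ≥ 4`. Then `B(ρ^R) = B(τ^C) = n - 2` and
`B(ρ^{RC}) = B(τ) = (n - 2 + √((n-2)² + 4))/2`. -/
theorem stmt_9 (n : ℕ) (hn : 4 ≤ n) (ρ τ ρR τC ρRC : ℕ → ℕ)
    (hρ : IsRho n ρ) (hτ : IsTau n τ)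
    (hρRperm : IsPerm n ρR) (hρRdef : ∀ i ∈ Set.Icc 1 n, ρR i = ρ (n + 1 - i))
    (hτCperm : IsPerm n τC) (hτCdef : ∀ i ∈ Set.Icc 1 n, τC i = n + 1 - τ i)
    (hρRCperm : IsPerm n ρRC) (hρRCdef : ∀ i ∈ Set.Icc 1 n, ρRC i = n + 1 - ρ (n + 1 - i)) :
    Bperm n ρR = (n : ℝ) - 2 ∧ Bperm n τC = (n : ℝ) - 2 ∧
      Bperm n ρRC = ((n : ℝ) - 2 + Real.sqrt (((n : ℝ) - 2) ^ 2 + 4)) / 2 ∧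
      Bperm n τ = ((n : ℝ) - 2 + Real.sqrt (((n : ℝ) - 2) ^ 2 + 4)) / 2 := by
  have hn4 : (4:ℝ) ≤ (n:ℝ) := by exact_mod_cast hn
  have hc0 : (0:ℝ) < (n:ℝ) - 2 := by linarith
  have hρval : ∀ q, 1 ≤ q → q ≤ n → ρ q = rhoF n q := by
    intro q h1 h2
    simp only [rhoF]
    split_ifs with h
    · have := hρ.2.1 ((q+1)/2) (by omega) (by omega)
      rw [show 2*((q+1)/2) - 1 = q by omega] at this
      omega
    · have := hρ.2.2 (q/2) (by omega) (by omega)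
      rw [show 2*(q/2) = q by omega] at this
      omega
  have hρRval : ∀ q, 1 ≤ q → q ≤ n → ρR q = rhoRF n q := by
    intro q h1 h2
    rw [hρRdef q ⟨h1, h2⟩, hρval (n+1-q) (by omega) (by omega)]
    rfl
  have hρRCval : ∀ q, 1 ≤ q → q ≤ n → ρRC q = rhoRCF n q := by
    intro q h1 h2
    rw [hρRCdef q ⟨h1, h2⟩, hρval (n+1-q) (by omega) (by omega)]
    rfl
  have hτval : ∀ q, 1 ≤ q → q ≤ n → τ q = tauF n q := by
    intro q h1 h2
    rcases hτ.2 with ⟨hp, ht1, ht2, htn⟩ | ⟨hp, ht1, ht2, ht3, htn⟩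
    · rcases eq_or_ne q n with hq | hq
      · rw [hq, htn]; simp [tauF]
      · rcases Nat.even_or_odd q with ⟨m, hm⟩ | ⟨m, hm⟩
        · have hh := (ht2 (q/2) (by omega) (by omega)).1
          rw [show 2*(q/2) = q by omega] at hh
          rw [hh]; simp only [tauF]
          rw [if_neg hq, if_pos (by omega), if_pos hp]
        · rcases eq_or_ne q 1 with h1' | h1'
          · rw [h1', ht1]; simp only [tauF]
            rw [if_neg (by omega), if_neg (by omega), if_pos hp]
            omega
          · have hh := (ht2 ((q-1)/2) (by omega) (by omega)).2
            rw [show 2*((q-1)/2)+1 = q by omega] at hh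
            rw [hh]; simp only [tauF]
            rw [if_neg hq, if_neg (by omega), if_pos hp]
    · rcases eq_or_ne q n with hq | hq
      · rw [hq, htn]; simp [tauF]
      · rcases Nat.even_or_odd q with ⟨m, hm⟩ | ⟨m, hm⟩
        · have hh := ht2 (q/2) (by omega) (by omega)
          rw [show 2*(q/2) = q by omega] at hh
          rw [hh]; simp only [tauF]
          rw [if_neg hq, if_pos (by omega), if_neg (by omega)]
        · rcases eq_or_ne q 1 with h1' | h1'
          · rw [h1', ht1]; simp only [tauF]
            rw [if_neg (by omega), if_neg (by omega), if_neg (by omega)]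
          · have hh := ht3 ((q-1)/2) (by omega) (by omega)
            rw [show 2*((q-1)/2)+1 = q by omega] at hh
            rw [hh]; simp only [tauF]
            rw [if_neg hq, if_neg (by omega), if_neg (by omega)]
  have hτCval : ∀ q, 1 ≤ q → q ≤ n → τC q = tauCF n q := by
    intro q h1 h2
    rw [hτCdef q ⟨h1, h2⟩, hτval q h1 h2]
    rfl
  have hroot1 : (1:ℝ) ≤ ((n:ℝ) - 2 + Real.sqrt (((n:ℝ) - 2)^2 + 4)) / 2 := by
    have := root_gt hc0; linarith
  refine ⟨?_, ?_, ?_, ?_⟩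
  · exact Bperm_eq (by linarith) (rhoR_lb hn hρRval) (rhoR_allowed hn hρRperm hρRval)
  · exact Bperm_eq (by linarith) (tC_lb2 hn hτCval) (tauC_allowed hn hτCperm hτCval)
  · exact Bperm_eq hroot1 (rRC_lb2 hn hρRCval) (rhoRC_allowed hn hρRCperm hρRCval)
  · exact Bperm_eq hroot1 (tau_lb2 hn hτval) (tau_allowed hn hτ.1 hτval)
end
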